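/- arXiv:0710.4784 — 2 statements merged into one kernel-verified Lean document; each statement's English description precedes it below -/
import Mathlib

section
/- Let φ, ψ be smooth on an open set U ⊆ ℝ² with Jacobian Δ = φ_x·ψ_y − φ_y·ψ_x. Then there exist functions S(x,y,p), a(x,y,p), b(x,y,p), c(x,y,p), determined by φ and ψ, and a function Q(x,y,p,q) that is a polynomial of degree at most 3 in q with coefficients depending on (x,y,p), such that for every four-times continuously differentiable function y(x) with graph in U and s(x) = φ_x + y'(x)·φ_y ≠ 0, the image function u of t (defined by u(φ(x,y(x))) = ψ(x,y(x))) satisfies at corresponding points: u' = (ψ_x + y'·ψ_y)/s; s³·u'' = Δ·y'' + S(x,y,y'); s⁵·u''' = Δ·s·y''' − 3Δ·φ_y·(y'')² + a(x,y,y')·y'' + b(x,y,y'); and s⁷·u'''' = Δ·s²·y'''' − 10Δ·φ_y·s·y''·y''' + c(x,y,y')·y''' + Q(x,y,y',y''). -/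
open Set

/-- Partial derivative with respect to the first variable. -/
noncomputable def px (f : ℝ → ℝ → ℝ) : ℝ → ℝ → ℝ := fun x y => deriv (fun s => f s y) x

/-- Partial derivative with respect to the second variable. -/
noncomputable def py (f : ℝ → ℝ → ℝ) : ℝ → ℝ → ℝ := fun x y => deriv (fun s => f x s) y

/-- Smoothness of a function of two real variables on a set. -/
def Smooth2On (f : ℝ → ℝ → ℝ) (U : Set (ℝ × ℝ)) : Prop :=
  ContDiffOn ℝ (⊤ : ℕ∞) (fun p : ℝ × ℝ => f p.1 p.2) U

/-- The Jacobian `Δ = φ_x ψ_y − φ_y ψ_x` of a point transformation. -/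
noncomputable def Jac (φ ψ : ℝ → ℝ → ℝ) : ℝ → ℝ → ℝ :=
  fun x y => px φ x y * py ψ x y - py φ x y * px ψ x y

lemma px_eq_fderiv {F : ℝ → ℝ → ℝ} {z : ℝ × ℝ}
    (h : DifferentiableAt ℝ (fun p : ℝ × ℝ => F p.1 p.2) z) :
    px F z.1 z.2 = fderiv ℝ (fun p : ℝ × ℝ => F p.1 p.2) z (1, 0) := by
  have hc : HasDerivAt (fun s : ℝ => ((s, z.2) : ℝ × ℝ)) ((1 : ℝ), (0 : ℝ)) z.1 :=
    (hasDerivAt_id z.1).prodMk (hasDerivAt_const _ _)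
  have h2 := h.hasFDerivAt.comp_hasDerivAt z.1 hc
  exact h2.deriv

lemma py_eq_fderiv {F : ℝ → ℝ → ℝ} {z : ℝ × ℝ}
    (h : DifferentiableAt ℝ (fun p : ℝ × ℝ => F p.1 p.2) z) :
    py F z.1 z.2 = fderiv ℝ (fun p : ℝ × ℝ => F p.1 p.2) z (0, 1) := by
  have hc : HasDerivAt (fun s : ℝ => ((z.1, s) : ℝ × ℝ)) ((0 : ℝ), (1 : ℝ)) z.2 :=
    (hasDerivAt_const _ _).prodMk (hasDerivAt_id z.2)
  have h2 := h.hasFDerivAt.comp_hasDerivAt z.2 hc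
  exact h2.deriv

lemma smooth_px {F : ℝ → ℝ → ℝ} {U : Set (ℝ × ℝ)} (hU : IsOpen U) (hF : Smooth2On F U) :
    Smooth2On (px F) U := by
  have hfd : ContDiffOn ℝ (⊤ : ℕ∞) (fun z => fderiv ℝ (fun p : ℝ × ℝ => F p.1 p.2) z) U :=
    hF.fderiv_of_isOpen hU (by exact_mod_cast le_top)
  have h2 : ContDiffOn ℝ (⊤ : ℕ∞) (fun z => fderiv ℝ (fun p : ℝ × ℝ => F p.1 p.2) z (1, 0)) U :=
    hfd.clm_apply contDiffOn_const
  exact h2.congr fun z hz =>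
    px_eq_fderiv ((hF.contDiffAt (hU.mem_nhds hz)).differentiableAt (by simp))

lemma smooth_py {F : ℝ → ℝ → ℝ} {U : Set (ℝ × ℝ)} (hU : IsOpen U) (hF : Smooth2On F U) :
    Smooth2On (py F) U := by
  have hfd : ContDiffOn ℝ (⊤ : ℕ∞) (fun z => fderiv ℝ (fun p : ℝ × ℝ => F p.1 p.2) z) U :=
    hF.fderiv_of_isOpen hU (by exact_mod_cast le_top)
  have h2 : ContDiffOn ℝ (⊤ : ℕ∞) (fun z => fderiv ℝ (fun p : ℝ × ℝ => F p.1 p.2) z (0, 1)) U :=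
    hfd.clm_apply contDiffOn_const
  exact h2.congr fun z hz =>
    py_eq_fderiv ((hF.contDiffAt (hU.mem_nhds hz)).differentiableAt (by simp))

lemma cderiv {F : ℝ → ℝ → ℝ} {U : Set (ℝ × ℝ)} (hU : IsOpen U) (hF : Smooth2On F U)
    {y : ℝ → ℝ} {x p : ℝ} (hy : HasDerivAt y p x) (hmem : (x, y x) ∈ U) :
    HasDerivAt (fun t => F t (y t)) (px F x (y x) + p * py F x (y x)) x := by
  have hdF : DifferentiableAt ℝ (fun q : ℝ × ℝ => F q.1 q.2) (x, y x) :=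
    (hF.contDiffAt (hU.mem_nhds hmem)).differentiableAt (by simp)
  have hc : HasDerivAt (fun t : ℝ => ((t, y t) : ℝ × ℝ)) ((1 : ℝ), p) x :=
    (hasDerivAt_id x).prodMk hy
  have h := hdF.hasFDerivAt.comp_hasDerivAt x hc
  refine h.congr_deriv ?_
  have h10 := px_eq_fderiv (z := (x, y x)) hdF
  have h01 := py_eq_fderiv (z := (x, y x)) hdF
  have hsplit : ((1 : ℝ), p) = ((1 : ℝ), (0 : ℝ)) + p • ((0 : ℝ), (1 : ℝ)) := by simp
  rw [hsplit, map_add, map_smul, ← h10, ← h01]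
  simp

noncomputable def pD (F : ℝ → ℝ → ℝ) (x Y p : ℝ) : ℝ := px F x Y + p * py F x Y
noncomputable def e2c0 (F : ℝ → ℝ → ℝ) (x Y p : ℝ) : ℝ :=
  pD (px F) x Y p + p * pD (py F) x Y p
noncomputable def E2 (F : ℝ → ℝ → ℝ) (x Y p q : ℝ) : ℝ := e2c0 F x Y p + q * py F x Y
noncomputable def e3c0 (F : ℝ → ℝ → ℝ) (x Y p : ℝ) : ℝ :=
  pD (px (px F)) x Y p + p * pD (py (px F)) x Y p + p * pD (px (py F)) x Y p
    + p ^ 2 * pD (py (py F)) x Y p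
noncomputable def e3cq (F : ℝ → ℝ → ℝ) (x Y p : ℝ) : ℝ :=
  py (px F) x Y + px (py F) x Y + 2 * p * py (py F) x Y + pD (py F) x Y p
noncomputable def E3 (F : ℝ → ℝ → ℝ) (x Y p q r : ℝ) : ℝ :=
  e3c0 F x Y p + q * e3cq F x Y p + r * py F x Y
noncomputable def e4c0 (F : ℝ → ℝ → ℝ) (x Y p : ℝ) : ℝ :=
  pD (px (px (px F))) x Y p + p * pD (py (px (px F))) x Y p
    + p * pD (px (py (px F))) x Y p + p ^ 2 * pD (py (py (px F))) x Y p
    + p * pD (px (px (py F))) x Y p + p ^ 2 * pD (py (px (py F))) x Y p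
    + p ^ 2 * pD (px (py (py F))) x Y p + p ^ 3 * pD (py (py (py F))) x Y p
noncomputable def e4cq (F : ℝ → ℝ → ℝ) (x Y p : ℝ) : ℝ :=
  py (px (px F)) x Y + px (py (px F)) x Y + 2 * p * py (py (px F)) x Y
    + px (px (py F)) x Y + 2 * p * py (px (py F)) x Y + 3 * p ^ 2 * py (py (py F)) x Y
    + 2 * p * px (py (py F)) x Y + pD (py (px F)) x Y p + 2 * pD (px (py F)) x Y p
    + 3 * p * pD (py (py F)) x Y p
noncomputable def e4cq2 (F : ℝ → ℝ → ℝ) (x Y : ℝ) : ℝ := 3 * py (py F) x Y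
noncomputable def e4cr (F : ℝ → ℝ → ℝ) (x Y p : ℝ) : ℝ :=
  py (px F) x Y + 2 * px (py F) x Y + 3 * p * py (py F) x Y + pD (py F) x Y p
noncomputable def E4 (F : ℝ → ℝ → ℝ) (x Y p q r w : ℝ) : ℝ :=
  e4c0 F x Y p + q * e4cq F x Y p + q ^ 2 * e4cq2 F x Y + r * e4cr F x Y p + w * py F x Y

variable {F : ℝ → ℝ → ℝ} {U : Set (ℝ × ℝ)} {y : ℝ → ℝ} {x : ℝ}

lemma hD1 (hU : IsOpen U) (hF : Smooth2On F U) (hy1 : HasDerivAt y (deriv y x) x)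
    (hm : (x, y x) ∈ U) :
    HasDerivAt (fun t => F t (y t)) (pD F x (y x) (deriv y x)) x := by
  simpa [pD] using cderiv hU hF hy1 hm

lemma hD2 (hU : IsOpen U) (hF : Smooth2On F U) (hy1 : HasDerivAt y (deriv y x) x)
    {y2 : ℝ} (hyd : HasDerivAt (deriv y) y2 x) (hm : (x, y x) ∈ U) :
    HasDerivAt (fun t => pD F t (y t) (deriv y t)) (E2 F x (y x) (deriv y x) y2) x := by
  have hx := cderiv hU (smooth_px hU hF) hy1 hm
  have hy' := cderiv hU (smooth_py hU hF) hy1 hm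
  have h := hx.add (hyd.mul hy')
  simp only [pD]
  refine h.congr_deriv ?_
  simp only [E2, e2c0, pD]; ring

lemma hD3 (hU : IsOpen U) (hF : Smooth2On F U) (hy1 : HasDerivAt y (deriv y x) x)
    (hyd : HasDerivAt (deriv y) (deriv (deriv y) x) x)
    {y3 : ℝ} (hydd : HasDerivAt (deriv (deriv y)) y3 x) (hm : (x, y x) ∈ U) :
    HasDerivAt (fun t => E2 F t (y t) (deriv y t) (deriv (deriv y) t))
      (E3 F x (y x) (deriv y x) (deriv (deriv y) x) y3) x := by
  have sxx := smooth_px hU (smooth_px hU hF)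
  have sxy := smooth_py hU (smooth_px hU hF)
  have syx := smooth_px hU (smooth_py hU hF)
  have syy := smooth_py hU (smooth_py hU hF)
  have h :=
    (((cderiv hU sxx hy1 hm).add (hyd.mul (cderiv hU sxy hy1 hm))).add
        (hyd.mul ((cderiv hU syx hy1 hm).add (hyd.mul (cderiv hU syy hy1 hm))))).add
      (hydd.mul (cderiv hU (smooth_py hU hF) hy1 hm))
  simp only [E2, e2c0, pD]
  refine h.congr_deriv ?_
  simp only [E3, e3c0, e3cq, pD, Pi.add_apply, Pi.mul_apply]; ring

lemma hD4 (hU : IsOpen U) (hF : Smooth2On F U) (hy1 : HasDerivAt y (deriv y x) x)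
    (hyd : HasDerivAt (deriv y) (deriv (deriv y) x) x)
    (hydd : HasDerivAt (deriv (deriv y)) (deriv (deriv (deriv y)) x) x)
    {y4 : ℝ} (hyddd : HasDerivAt (deriv (deriv (deriv y))) y4 x) (hm : (x, y x) ∈ U) :
    HasDerivAt (fun t => E3 F t (y t) (deriv y t) (deriv (deriv y) t) (deriv (deriv (deriv y)) t))
      (E4 F x (y x) (deriv y x) (deriv (deriv y) x) (deriv (deriv (deriv y)) x) y4) x := by
  have sy := smooth_py hU hF
  have sxx := smooth_px hU (smooth_px hU hF)
  have sxy := smooth_py hU (smooth_px hU hF)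
  have syx := smooth_px hU (smooth_py hU hF)
  have syy := smooth_py hU (smooth_py hU hF)
  have c1 := cderiv hU (smooth_px hU sxx) hy1 hm
  have c2 := cderiv hU (smooth_py hU sxx) hy1 hm
  have c3 := cderiv hU (smooth_px hU sxy) hy1 hm
  have c4 := cderiv hU (smooth_py hU sxy) hy1 hm
  have c5 := cderiv hU (smooth_px hU syx) hy1 hm
  have c6 := cderiv hU (smooth_py hU syx) hy1 hm
  have c7 := cderiv hU (smooth_px hU syy) hy1 hm
  have c8 := cderiv hU (smooth_py hU syy) hy1 hm
  have bxy := cderiv hU sxy hy1 hm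
  have byx := cderiv hU syx hy1 hm
  have byy := cderiv hU syy hy1 hm
  have by' := cderiv hU sy hy1 hm
  have h :=
    (((((c1.add (hyd.mul c2)).add
          (hyd.mul (c3.add (hyd.mul c4)))).add
          (hyd.mul (c5.add (hyd.mul c6)))).add
          ((hyd.pow 2).mul (c7.add (hyd.mul c8)))).add
        (hydd.mul (((bxy.add byx).add (((hasDerivAt_const x (2:ℝ)).mul hyd).mul byy)).add
          (byx.add (hyd.mul byy))))).add
      (hyddd.mul by')
  simp only [E3, e3c0, e3cq, pD]
  refine h.congr_deriv ?_
  simp only [E4, e4c0, e4cq, e4cq2, e4cr, pD, Pi.add_apply, Pi.mul_apply, Pi.pow_apply]; ring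

noncomputable def Sfun (φ ψ : ℝ → ℝ → ℝ) (x Y p : ℝ) : ℝ :=
  pD φ x Y p * e2c0 ψ x Y p - pD ψ x Y p * e2c0 φ x Y p
noncomputable def X3 (φ ψ : ℝ → ℝ → ℝ) (x Y p q r : ℝ) : ℝ :=
  (pD φ x Y p) ^ 2 * E3 ψ x Y p q r
    - 3 * E2 φ x Y p q * (pD φ x Y p * E2 ψ x Y p q - pD ψ x Y p * E2 φ x Y p q)
    - pD φ x Y p * pD ψ x Y p * E3 φ x Y p q r
noncomputable def bfun (φ ψ : ℝ → ℝ → ℝ) (x Y p : ℝ) : ℝ := X3 φ ψ x Y p 0 0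
noncomputable def afun (φ ψ : ℝ → ℝ → ℝ) (x Y p : ℝ) : ℝ :=
  X3 φ ψ x Y p 1 0 - X3 φ ψ x Y p 0 0 + 3 * Jac φ ψ x Y * py φ x Y
noncomputable def X4 (φ ψ : ℝ → ℝ → ℝ) (x Y p q r w : ℝ) : ℝ :=
  (pD φ x Y p) ^ 3 * E4 ψ x Y p q r w
    - 6 * E2 φ x Y p q * (Jac φ ψ x Y * pD φ x Y p * r - 3 * Jac φ ψ x Y * py φ x Y * q ^ 2
        + afun φ ψ x Y p * q + bfun φ ψ x Y p)
    - (3 * (E2 φ x Y p q) ^ 2 + 4 * pD φ x Y p * E3 φ x Y p q r)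
        * (Jac φ ψ x Y * q + Sfun φ ψ x Y p)
    - (pD φ x Y p) ^ 2 * pD ψ x Y p * E4 φ x Y p q r w
noncomputable def cfun (φ ψ : ℝ → ℝ → ℝ) (x Y p : ℝ) : ℝ :=
  X4 φ ψ x Y p 0 1 0 - X4 φ ψ x Y p 0 0 0
noncomputable def q0f (φ ψ : ℝ → ℝ → ℝ) (x Y p : ℝ) : ℝ := X4 φ ψ x Y p 0 0 0
noncomputable def q2f (φ ψ : ℝ → ℝ → ℝ) (x Y p : ℝ) : ℝ :=
  (X4 φ ψ x Y p 1 0 0 + X4 φ ψ x Y p (-1) 0 0) / 2 - X4 φ ψ x Y p 0 0 0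
noncomputable def q3f (φ ψ : ℝ → ℝ → ℝ) (x Y p : ℝ) : ℝ :=
  (X4 φ ψ x Y p 2 0 0 - 3 * X4 φ ψ x Y p 1 0 0 + 3 * X4 φ ψ x Y p 0 0 0
    - X4 φ ψ x Y p (-1) 0 0) / 6
noncomputable def q1f (φ ψ : ℝ → ℝ → ℝ) (x Y p : ℝ) : ℝ :=
  X4 φ ψ x Y p 1 0 0 - X4 φ ψ x Y p 0 0 0 - q3f φ ψ x Y p - q2f φ ψ x Y p
noncomputable def Qfun (φ ψ : ℝ → ℝ → ℝ) (x Y p q : ℝ) : ℝ :=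
  q3f φ ψ x Y p * q ^ 3 + q2f φ ψ x Y p * q ^ 2 + q1f φ ψ x Y p * q + q0f φ ψ x Y p

lemma iter2 (f : ℝ → ℝ) : iteratedDeriv 2 f = deriv (deriv f) := by
  rw [show (2 : ℕ) = 1 + 1 from rfl, iteratedDeriv_succ, iteratedDeriv_one]
lemma iter3 (f : ℝ → ℝ) : iteratedDeriv 3 f = deriv (deriv (deriv f)) := by
  rw [show (3 : ℕ) = 2 + 1 from rfl, iteratedDeriv_succ, iter2]
lemma iter4 (f : ℝ → ℝ) : iteratedDeriv 4 f = deriv (deriv (deriv (deriv f))) := by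
  rw [show (4 : ℕ) = 3 + 1 from rfl, iteratedDeriv_succ, iter3]

/-- the transformation formulas for the first four derivatives under a
point transformation `t = φ(x,y)`, `u = ψ(x,y)`:
`u' = (ψ_x + y'ψ_y)/s`, `s³u'' = Δy'' + S`, `s⁵u''' = Δs y''' − 3Δφ_y (y'')² + a y'' + b`,
`s⁷u'''' = Δs² y'''' − 10Δφ_y s y'' y''' + c y''' + Q`, with `Q` cubic in `y''`. -/
theorem derivative_transformation_formulas
    (U : Set (ℝ × ℝ)) (hU : IsOpen U)
    (φ ψ : ℝ → ℝ → ℝ) (hφ : Smooth2On φ U) (hψ : Smooth2On ψ U) :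
    ∃ (S a b c : ℝ → ℝ → ℝ → ℝ) (Q : ℝ → ℝ → ℝ → ℝ → ℝ),
      (∃ q0 q1 q2 q3 : ℝ → ℝ → ℝ → ℝ, ∀ x y p q,
        Q x y p q = q3 x y p * q ^ 3 + q2 x y p * q ^ 2 + q1 x y p * q + q0 x y p) ∧
      ∀ (y : ℝ → ℝ) (I : Set ℝ), IsOpen I → I.OrdConnected →
        (∀ x ∈ I, (x, y x) ∈ U) → ContDiffOn ℝ 4 y I →
        (∀ x ∈ I, px φ x (y x) + deriv y x * py φ x (y x) ≠ 0) →
        ∀ (u : ℝ → ℝ) (W : Set ℝ), IsOpen W → (∀ x ∈ I, φ x (y x) ∈ W) →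
          ContDiffOn ℝ 4 u W →
          (∀ x ∈ I, u (φ x (y x)) = ψ x (y x)) →
          ∀ x ∈ I,
            deriv u (φ x (y x))
              = (px ψ x (y x) + deriv y x * py ψ x (y x))
                / (px φ x (y x) + deriv y x * py φ x (y x)) ∧
            (px φ x (y x) + deriv y x * py φ x (y x)) ^ 3
                * iteratedDeriv 2 u (φ x (y x))
              = Jac φ ψ x (y x) * iteratedDeriv 2 y x + S x (y x) (deriv y x) ∧
            (px φ x (y x) + deriv y x * py φ x (y x)) ^ 5
                * iteratedDeriv 3 u (φ x (y x))
              = Jac φ ψ x (y x) * (px φ x (y x) + deriv y x * py φ x (y x))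
                  * iteratedDeriv 3 y x
                - 3 * Jac φ ψ x (y x) * py φ x (y x) * (iteratedDeriv 2 y x) ^ 2
                + a x (y x) (deriv y x) * iteratedDeriv 2 y x
                + b x (y x) (deriv y x) ∧
            (px φ x (y x) + deriv y x * py φ x (y x)) ^ 7
                * iteratedDeriv 4 u (φ x (y x))
              = Jac φ ψ x (y x) * (px φ x (y x) + deriv y x * py φ x (y x)) ^ 2
                  * iteratedDeriv 4 y x
                - 10 * Jac φ ψ x (y x) * py φ x (y x)
                  * (px φ x (y x) + deriv y x * py φ x (y x))
                  * iteratedDeriv 2 y x * iteratedDeriv 3 y x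
                + c x (y x) (deriv y x) * iteratedDeriv 3 y x
                + Q x (y x) (deriv y x) (iteratedDeriv 2 y x) := by
  classical
  refine ⟨Sfun φ ψ, afun φ ψ, bfun φ ψ, cfun φ ψ, Qfun φ ψ,
    ⟨q0f φ ψ, q1f φ ψ, q2f φ ψ, q3f φ ψ, fun _ _ _ _ => rfl⟩, ?_⟩
  intro y I hI _hord hmemU hy4 hsne u W hW hfW hu4 hgu x hx
  -- regularity chains
  have hyc1 : ContDiffOn ℝ 3 (deriv y) I := hy4.deriv_of_isOpen hI (by norm_num)
  have hyc2 : ContDiffOn ℝ 2 (deriv (deriv y)) I := hyc1.deriv_of_isOpen hI (by norm_num)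
  have hyc3 : ContDiffOn ℝ 1 (deriv (deriv (deriv y))) I := hyc2.deriv_of_isOpen hI (by norm_num)
  have Hy1 : ∀ t ∈ I, HasDerivAt y (deriv y t) t := fun t ht =>
    ((hy4.differentiableOn (by norm_num)).differentiableAt (hI.mem_nhds ht)).hasDerivAt
  have Hy2 : ∀ t ∈ I, HasDerivAt (deriv y) (deriv (deriv y) t) t := fun t ht =>
    ((hyc1.differentiableOn (by norm_num)).differentiableAt (hI.mem_nhds ht)).hasDerivAt
  have Hy3 : ∀ t ∈ I, HasDerivAt (deriv (deriv y)) (deriv (deriv (deriv y)) t) t := fun t ht =>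
    ((hyc2.differentiableOn (by norm_num)).differentiableAt (hI.mem_nhds ht)).hasDerivAt
  have Hy4 : ∀ t ∈ I,
      HasDerivAt (deriv (deriv (deriv y))) (deriv (deriv (deriv (deriv y))) t) t := fun t ht =>
    ((hyc3.differentiableOn (by norm_num)).differentiableAt (hI.mem_nhds ht)).hasDerivAt
  have huc1 : ContDiffOn ℝ 3 (deriv u) W := hu4.deriv_of_isOpen hW (by norm_num)
  have huc2 : ContDiffOn ℝ 2 (deriv (deriv u)) W := huc1.deriv_of_isOpen hW (by norm_num)
  have huc3 : ContDiffOn ℝ 1 (deriv (deriv (deriv u))) W := huc2.deriv_of_isOpen hW (by norm_num)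
  have Hu1 : ∀ z ∈ W, HasDerivAt u (deriv u z) z := fun z hz =>
    ((hu4.differentiableOn (by norm_num)).differentiableAt (hW.mem_nhds hz)).hasDerivAt
  have Hu2 : ∀ z ∈ W, HasDerivAt (deriv u) (deriv (deriv u) z) z := fun z hz =>
    ((huc1.differentiableOn (by norm_num)).differentiableAt (hW.mem_nhds hz)).hasDerivAt
  have Hu3 : ∀ z ∈ W, HasDerivAt (deriv (deriv u)) (deriv (deriv (deriv u)) z) z := fun z hz =>
    ((huc2.differentiableOn (by norm_num)).differentiableAt (hW.mem_nhds hz)).hasDerivAt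
  have Hu4 : ∀ z ∈ W,
      HasDerivAt (deriv (deriv (deriv u))) (deriv (deriv (deriv (deriv u))) z) z := fun z hz =>
    ((huc3.differentiableOn (by norm_num)).differentiableAt (hW.mem_nhds hz)).hasDerivAt
  -- curve derivative families
  have hfD : ∀ t ∈ I, HasDerivAt (fun t' => φ t' (y t')) (pD φ t (y t) (deriv y t)) t :=
    fun t ht => hD1 hU hφ (Hy1 t ht) (hmemU t ht)
  have hgD : ∀ t ∈ I, HasDerivAt (fun t' => ψ t' (y t')) (pD ψ t (y t) (deriv y t)) t :=
    fun t ht => hD1 hU hψ (Hy1 t ht) (hmemU t ht)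
  have hBD : ∀ t ∈ I, HasDerivAt (fun t' => pD φ t' (y t') (deriv y t'))
      (E2 φ t (y t) (deriv y t) (deriv (deriv y) t)) t :=
    fun t ht => hD2 hU hφ (Hy1 t ht) (Hy2 t ht) (hmemU t ht)
  have hBDψ : ∀ t ∈ I, HasDerivAt (fun t' => pD ψ t' (y t') (deriv y t'))
      (E2 ψ t (y t) (deriv y t) (deriv (deriv y) t)) t :=
    fun t ht => hD2 hU hψ (Hy1 t ht) (Hy2 t ht) (hmemU t ht)
  have hCD : ∀ t ∈ I, HasDerivAt
      (fun t' => E2 φ t' (y t') (deriv y t') (deriv (deriv y) t'))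
      (E3 φ t (y t) (deriv y t) (deriv (deriv y) t) (deriv (deriv (deriv y)) t)) t :=
    fun t ht => hD3 hU hφ (Hy1 t ht) (Hy2 t ht) (Hy3 t ht) (hmemU t ht)
  have hCDψ : ∀ t ∈ I, HasDerivAt
      (fun t' => E2 ψ t' (y t') (deriv y t') (deriv (deriv y) t'))
      (E3 ψ t (y t) (deriv y t) (deriv (deriv y) t) (deriv (deriv (deriv y)) t)) t :=
    fun t ht => hD3 hU hψ (Hy1 t ht) (Hy2 t ht) (Hy3 t ht) (hmemU t ht)
  -- u-composed families
  have hA0 : ∀ t ∈ I, HasDerivAt (fun t' => u (φ t' (y t')))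
      (deriv u (φ t (y t)) * pD φ t (y t) (deriv y t)) t :=
    fun t ht => HasDerivAt.comp t (Hu1 _ (hfW t ht)) (hfD t ht)
  have hA1 : ∀ t ∈ I, HasDerivAt (fun t' => deriv u (φ t' (y t')))
      (deriv (deriv u) (φ t (y t)) * pD φ t (y t) (deriv y t)) t :=
    fun t ht => HasDerivAt.comp t (Hu2 _ (hfW t ht)) (hfD t ht)
  have hA2 : ∀ t ∈ I, HasDerivAt (fun t' => deriv (deriv u) (φ t' (y t')))
      (deriv (deriv (deriv u)) (φ t (y t)) * pD φ t (y t) (deriv y t)) t :=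
    fun t ht => HasDerivAt.comp t (Hu3 _ (hfW t ht)) (hfD t ht)
  have hA3 : ∀ t ∈ I, HasDerivAt (fun t' => deriv (deriv (deriv u)) (φ t' (y t')))
      (deriv (deriv (deriv (deriv u))) (φ t (y t)) * pD φ t (y t) (deriv y t)) t :=
    fun t ht => HasDerivAt.comp t (Hu4 _ (hfW t ht)) (hfD t ht)
  -- level 1
  have EQ1 : ∀ t ∈ I, pD ψ t (y t) (deriv y t)
      = deriv u (φ t (y t)) * pD φ t (y t) (deriv y t) := by
    intro t ht
    have hev : (fun t' => ψ t' (y t')) =ᶠ[nhds t] (fun t' => u (φ t' (y t'))) :=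
      Filter.eventuallyEq_of_mem (hI.mem_nhds ht) (fun z hz => (hgu z hz).symm)
    exact (hgD t ht).unique ((hA0 t ht).congr_of_eventuallyEq hev)
  -- level 2
  have EQ2 : ∀ t ∈ I, E2 ψ t (y t) (deriv y t) (deriv (deriv y) t)
      = deriv (deriv u) (φ t (y t))
          * (pD φ t (y t) (deriv y t) * pD φ t (y t) (deriv y t))
        + deriv u (φ t (y t)) * E2 φ t (y t) (deriv y t) (deriv (deriv y) t) := by
    intro t ht
    have hprod := (hA1 t ht).mul (hBD t ht)
    have hev : (fun t' => pD ψ t' (y t') (deriv y t'))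
        =ᶠ[nhds t] (fun t' => deriv u (φ t' (y t')) * pD φ t' (y t') (deriv y t')) :=
      Filter.eventuallyEq_of_mem (hI.mem_nhds ht) (fun z hz => EQ1 z hz)
    have h := (hBDψ t ht).unique (hprod.congr_of_eventuallyEq hev)
    linear_combination h
  -- level 3
  have EQ3 : ∀ t ∈ I, E3 ψ t (y t) (deriv y t) (deriv (deriv y) t) (deriv (deriv (deriv y)) t)
      = deriv (deriv (deriv u)) (φ t (y t))
          * (pD φ t (y t) (deriv y t) * pD φ t (y t) (deriv y t) * pD φ t (y t) (deriv y t))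
        + 3 * deriv (deriv u) (φ t (y t)) * pD φ t (y t) (deriv y t)
          * E2 φ t (y t) (deriv y t) (deriv (deriv y) t)
        + deriv u (φ t (y t))
          * E3 φ t (y t) (deriv y t) (deriv (deriv y) t) (deriv (deriv (deriv y)) t) := by
    intro t ht
    have hprod := ((hA2 t ht).mul ((hBD t ht).mul (hBD t ht))).add
      ((hA1 t ht).mul (hCD t ht))
    have hev : (fun t' => E2 ψ t' (y t') (deriv y t') (deriv (deriv y) t'))
        =ᶠ[nhds t] (fun t' => deriv (deriv u) (φ t' (y t'))
            * (pD φ t' (y t') (deriv y t') * pD φ t' (y t') (deriv y t'))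
          + deriv u (φ t' (y t')) * E2 φ t' (y t') (deriv y t') (deriv (deriv y) t')) :=
      Filter.eventuallyEq_of_mem (hI.mem_nhds ht) (fun z hz => EQ2 z hz)
    have h := (hCDψ t ht).unique (hprod.congr_of_eventuallyEq hev)
    simp only [Pi.mul_apply] at h
    linear_combination h
  -- level 4 (only at x)
  have hD4φ := hD4 hU hφ (Hy1 x hx) (Hy2 x hx) (Hy3 x hx) (Hy4 x hx) (hmemU x hx)
  have hD4ψ := hD4 hU hψ (Hy1 x hx) (Hy2 x hx) (Hy3 x hx) (Hy4 x hx) (hmemU x hx)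
  have EQ4 : E4 ψ x (y x) (deriv y x) (deriv (deriv y) x) (deriv (deriv (deriv y)) x)
        (deriv (deriv (deriv (deriv y))) x)
      = deriv (deriv (deriv (deriv u))) (φ x (y x))
          * (pD φ x (y x) (deriv y x) * pD φ x (y x) (deriv y x)
            * pD φ x (y x) (deriv y x) * pD φ x (y x) (deriv y x))
        + 6 * deriv (deriv (deriv u)) (φ x (y x))
          * (pD φ x (y x) (deriv y x) * pD φ x (y x) (deriv y x))
          * E2 φ x (y x) (deriv y x) (deriv (deriv y) x)
        + 3 * deriv (deriv u) (φ x (y x))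
          * (E2 φ x (y x) (deriv y x) (deriv (deriv y) x)
            * E2 φ x (y x) (deriv y x) (deriv (deriv y) x))
        + 4 * deriv (deriv u) (φ x (y x)) * pD φ x (y x) (deriv y x)
          * E3 φ x (y x) (deriv y x) (deriv (deriv y) x) (deriv (deriv (deriv y)) x)
        + deriv u (φ x (y x))
          * E4 φ x (y x) (deriv y x) (deriv (deriv y) x) (deriv (deriv (deriv y)) x)
            (deriv (deriv (deriv (deriv y))) x) := by
    have hprod := (((hA3 x hx).mul (((hBD x hx).mul (hBD x hx)).mul (hBD x hx))).add
        ((((hasDerivAt_const x (3 : ℝ)).mul (hA2 x hx)).mul (hBD x hx)).mul (hCD x hx))).add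
      ((hA1 x hx).mul hD4φ)
    have hev : (fun t' => E3 ψ t' (y t') (deriv y t') (deriv (deriv y) t')
          (deriv (deriv (deriv y)) t'))
        =ᶠ[nhds x] (fun t' => deriv (deriv (deriv u)) (φ t' (y t'))
            * (pD φ t' (y t') (deriv y t') * pD φ t' (y t') (deriv y t')
              * pD φ t' (y t') (deriv y t'))
          + 3 * deriv (deriv u) (φ t' (y t')) * pD φ t' (y t') (deriv y t')
            * E2 φ t' (y t') (deriv y t') (deriv (deriv y) t')
          + deriv u (φ t' (y t'))
            * E3 φ t' (y t') (deriv y t') (deriv (deriv y) t') (deriv (deriv (deriv y)) t')) :=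
      Filter.eventuallyEq_of_mem (hI.mem_nhds hx) (fun z hz => EQ3 z hz)
    have h := hD4ψ.unique (hprod.congr_of_eventuallyEq hev)
    simp only [Pi.mul_apply] at h
    linear_combination h
  -- final algebra at x
  have hP : pD φ x (y x) (deriv y x) ≠ 0 := hsne x hx
  have e1 := EQ1 x hx
  have e2 := EQ2 x hx
  have e3 := EQ3 x hx
  have m2 : pD φ x (y x) (deriv y x) ^ 3 * deriv (deriv u) (φ x (y x))
      = Jac φ ψ x (y x) * deriv (deriv y) x + Sfun φ ψ x (y x) (deriv y x) := by
    have k2 : pD φ x (y x) (deriv y x) ^ 3 * deriv (deriv u) (φ x (y x))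
        = pD φ x (y x) (deriv y x) * E2 ψ x (y x) (deriv y x) (deriv (deriv y) x)
          - pD ψ x (y x) (deriv y x) * E2 φ x (y x) (deriv y x) (deriv (deriv y) x) := by
      linear_combination (-(pD φ x (y x) (deriv y x))) * e2
        + E2 φ x (y x) (deriv y x) (deriv (deriv y) x) * e1
    refine k2.trans ?_
    simp only [Sfun, E2, Jac, pD, e2c0]
    ring
  have m3 : pD φ x (y x) (deriv y x) ^ 5 * deriv (deriv (deriv u)) (φ x (y x))
      = Jac φ ψ x (y x) * pD φ x (y x) (deriv y x) * deriv (deriv (deriv y)) x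
        - 3 * Jac φ ψ x (y x) * py φ x (y x) * deriv (deriv y) x ^ 2
        + afun φ ψ x (y x) (deriv y x) * deriv (deriv y) x
        + bfun φ ψ x (y x) (deriv y x) := by
    have k3 : pD φ x (y x) (deriv y x) ^ 5 * deriv (deriv (deriv u)) (φ x (y x))
        = X3 φ ψ x (y x) (deriv y x) (deriv (deriv y) x) (deriv (deriv (deriv y)) x) := by
      simp only [X3]
      linear_combination (-(pD φ x (y x) (deriv y x) ^ 2)) * e3
        + (3 * pD φ x (y x) (deriv y x)
            * E2 φ x (y x) (deriv y x) (deriv (deriv y) x)) * e2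
        + (pD φ x (y x) (deriv y x)
              * E3 φ x (y x) (deriv y x) (deriv (deriv y) x) (deriv (deriv (deriv y)) x)
            - 3 * E2 φ x (y x) (deriv y x) (deriv (deriv y) x) ^ 2) * e1
    refine k3.trans ?_
    simp only [X3, afun, bfun, Sfun, E3, E2, Jac, pD]
    ring
  have m4 : pD φ x (y x) (deriv y x) ^ 7 * deriv (deriv (deriv (deriv u))) (φ x (y x))
      = Jac φ ψ x (y x) * pD φ x (y x) (deriv y x) ^ 2
          * deriv (deriv (deriv (deriv y))) x
        - 10 * Jac φ ψ x (y x) * py φ x (y x) * pD φ x (y x) (deriv y x)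
          * deriv (deriv y) x * deriv (deriv (deriv y)) x
        + cfun φ ψ x (y x) (deriv y x) * deriv (deriv (deriv y)) x
        + Qfun φ ψ x (y x) (deriv y x) (deriv (deriv y) x) := by
    have k4 : pD φ x (y x) (deriv y x) ^ 7 * deriv (deriv (deriv (deriv u))) (φ x (y x))
        = X4 φ ψ x (y x) (deriv y x) (deriv (deriv y) x) (deriv (deriv (deriv y)) x)
            (deriv (deriv (deriv (deriv y))) x) := by
      simp only [X4]
      linear_combination (-(pD φ x (y x) (deriv y x) ^ 3)) * EQ4
        - 6 * E2 φ x (y x) (deriv y x) (deriv (deriv y) x) * m3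
        - (3 * E2 φ x (y x) (deriv y x) (deriv (deriv y) x) ^ 2
            + 4 * pD φ x (y x) (deriv y x)
              * E3 φ x (y x) (deriv y x) (deriv (deriv y) x) (deriv (deriv (deriv y)) x)) * m2
        + pD φ x (y x) (deriv y x) ^ 2
            * E4 φ x (y x) (deriv y x) (deriv (deriv y) x) (deriv (deriv (deriv y)) x)
              (deriv (deriv (deriv (deriv y))) x) * e1
    refine k4.trans ?_
    simp only [X4, cfun, Qfun, q0f, q1f, q2f, q3f, afun, bfun, Sfun, E4, E3, E2, Jac, pD]
    ring
  refine ⟨?_, ?_, ?_, ?_⟩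
  · show deriv u (φ x (y x))
      = pD ψ x (y x) (deriv y x) / pD φ x (y x) (deriv y x)
    rw [e1, mul_div_assoc, div_self hP, mul_one]
  · simp only [iter2]
    exact m2
  · simp only [iter2, iter3]
    exact m3
  · simp only [iter2, iter3, iter4]
    exact m4
end

section
/- Let φ(x) be smooth with φ_x ≠ 0 on an interval I, ψ(x,y) smooth with ψ_y ≠ 0 on I×J, and let a(x), b(x) be smooth. Define A1, A0, B0, C2, C1, C0, D4, D3, D2, D1, D0 by the formulas in the context, and let α, β be smooth functions with α(φ(x)) = a(x) and β(φ(x)) = b(x). Then a four-times continuously differentiable function y(x) with graph in I×J is a solution of equation (E1) with these coefficients if and only if the image function u of t (defined by u(φ(x)) = ψ(x, y(x))) satisfies u'''' + α(t)·u' + β(t)·u = 0. -/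
open Set

/-- The left-hand side of equation (E1) evaluated along `y` at `x`. -/
noncomputable def E1val (A0 A1 B0 C0 C1 C2 D0 D1 D2 D3 D4 : ℝ → ℝ → ℝ)
    (y : ℝ → ℝ) (x : ℝ) : ℝ :=
  iteratedDeriv 4 y x
    + (A1 x (y x) * deriv y x + A0 x (y x)) * iteratedDeriv 3 y x
    + B0 x (y x) * (iteratedDeriv 2 y x) ^ 2
    + (C2 x (y x) * (deriv y x) ^ 2 + C1 x (y x) * deriv y x + C0 x (y x))
        * iteratedDeriv 2 y x
    + D4 x (y x) * (deriv y x) ^ 4 + D3 x (y x) * (deriv y x) ^ 3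
    + D2 x (y x) * (deriv y x) ^ 2 + D1 x (y x) * deriv y x + D0 x (y x)

section Toolkit
variable {f : ℝ → ℝ → ℝ} {U : Set (ℝ × ℝ)}

theorem Smooth2On.differentiableAt (hf : Smooth2On f U) (hU : IsOpen U) {p : ℝ × ℝ}
    (hp : p ∈ U) : DifferentiableAt ℝ (fun q : ℝ × ℝ => f q.1 q.2) p :=
  (hf.differentiableOn (by norm_num)).differentiableAt (hU.mem_nhds hp)

/-- derivative along a curve -/
theorem hasDerivAt_comp2 (hf : Smooth2On f U) (hU : IsOpen U) {x : ℝ} {y : ℝ → ℝ} {y' : ℝ}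
    (hy : HasDerivAt y y' x) (hp : (x, y x) ∈ U) :
    HasDerivAt (fun s => f s (y s)) (fderiv ℝ (fun q : ℝ × ℝ => f q.1 q.2) (x, y x) (1, y')) x := by
  have hd := (hf.differentiableAt hU hp).hasFDerivAt
  have hc : HasDerivAt (fun s => ((s, y s) : ℝ × ℝ)) (1, y') x := (hasDerivAt_id x).prodMk hy
  exact hd.comp_hasDerivAt x hc

theorem px_eq_fderiv_s6 (hf : Smooth2On f U) (hU : IsOpen U) {x y : ℝ} (hp : (x, y) ∈ U) :
    px f x y = fderiv ℝ (fun q : ℝ × ℝ => f q.1 q.2) (x, y) (1, 0) :=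
  (hasDerivAt_comp2 hf hU (y := fun _ => y) (hasDerivAt_const x y) hp).deriv

theorem py_eq_fderiv_s6 (hf : Smooth2On f U) (hU : IsOpen U) {x y : ℝ} (hp : (x, y) ∈ U) :
    py f x y = fderiv ℝ (fun q : ℝ × ℝ => f q.1 q.2) (x, y) (0, 1) := by
  have hd := (hf.differentiableAt hU hp).hasFDerivAt
  have hc : HasDerivAt (fun s => ((x, s) : ℝ × ℝ)) ((0 : ℝ), (1 : ℝ)) y :=
    (hasDerivAt_const y x).prodMk (hasDerivAt_id y)
  exact (hd.comp_hasDerivAt y hc).deriv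

/-- main engine: chain rule along a curve in `px/py` form. -/
theorem hasDerivAt_comp2' (hf : Smooth2On f U) (hU : IsOpen U) {x : ℝ} {y : ℝ → ℝ} {y' : ℝ}
    (hy : HasDerivAt y y' x) (hp : (x, y x) ∈ U) :
    HasDerivAt (fun s => f s (y s)) (px f x (y x) + py f x (y x) * y') x := by
  have h := hasDerivAt_comp2 hf hU hy hp
  rw [px_eq_fderiv_s6 hf hU hp, py_eq_fderiv_s6 hf hU hp]
  convert h using 1
  have e : ((1 : ℝ), y') = ((1 : ℝ), (0 : ℝ)) + y' • ((0 : ℝ), (1 : ℝ)) := by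
    simp [Prod.ext_iff]
  rw [e, map_add, map_smul]
  simp [mul_comm]

theorem Smooth2On.px (hf : Smooth2On f U) (hU : IsOpen U) : Smooth2On (px f) U := by
  have h : ContDiffOn ℝ (⊤ : ℕ∞) (fun p : ℝ × ℝ =>
      fderiv ℝ (fun q : ℝ × ℝ => f q.1 q.2) p (1, 0)) U := by
    exact (hf.fderiv_of_isOpen hU (le_refl _)).clm_apply contDiffOn_const
  exact h.congr fun p hp => px_eq_fderiv_s6 hf hU (x := p.1) (y := p.2) hp

theorem Smooth2On.py (hf : Smooth2On f U) (hU : IsOpen U) : Smooth2On (py f) U := by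
  have h : ContDiffOn ℝ (⊤ : ℕ∞) (fun p : ℝ × ℝ =>
      fderiv ℝ (fun q : ℝ × ℝ => f q.1 q.2) p (0, 1)) U :=
    (hf.fderiv_of_isOpen hU (le_refl _)).clm_apply contDiffOn_const
  exact h.congr fun p hp => py_eq_fderiv_s6 hf hU (x := p.1) (y := p.2) hp

/-- Schwarz symmetry of mixed partials. -/
theorem schwarz2 (hf : Smooth2On f U) (hU : IsOpen U) {x y : ℝ} (hp : (x, y) ∈ U) :
    px (py f) x y = py (px f) x y := by
  set f2 : ℝ × ℝ → ℝ := fun q => f q.1 q.2 with hf2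
  have hsym : IsSymmSndFDerivAt ℝ f2 (x, y) := by
    refine ContDiffAt.isSymmSndFDerivAt (n := 2) ?_ (by simp [minSmoothness_of_isRCLikeNormedField])
    exact (hf.contDiffAt (hU.mem_nhds hp)).of_le (by
      rw [show (2 : WithTop ℕ∞) = ((2 : ℕ∞) : WithTop ℕ∞) by rfl]
      exact WithTop.coe_le_coe.2 le_top)
  -- fderiv of f2 is C^∞ on U
  have hfd : ContDiffOn ℝ (⊤ : ℕ∞) (fderiv ℝ f2) U := hf.fderiv_of_isOpen hU (le_refl _)
  have hUx : U ∈ nhds ((x, y) : ℝ × ℝ) := hU.mem_nhds hp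
  have hdd : DifferentiableAt ℝ (fderiv ℝ f2) (x, y) :=
    (hfd.differentiableOn (by norm_num)).differentiableAt hUx
  -- px (py f) x y = fderiv (fderiv f2) (x,y) (1,0) (0,1)
  have hpygood : ∀ p ∈ U, py f p.1 p.2 = fderiv ℝ f2 p (0, 1) := fun p hp' =>
    py_eq_fderiv_s6 hf hU hp'
  have hpxgood : ∀ p ∈ U, px f p.1 p.2 = fderiv ℝ f2 p (1, 0) := fun p hp' =>
    px_eq_fderiv_s6 hf hU hp'
  have h1 : px (py f) x y = fderiv ℝ (fderiv ℝ f2) (x, y) (1, 0) (0, 1) := by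
    have hder : HasDerivAt (fun s => py f s y)
        ((fderiv ℝ (fderiv ℝ f2) (x, y)) (1, 0) (0, 1)) x := by
      have hcurve : HasDerivAt (fun s => ((s, y) : ℝ × ℝ)) ((1 : ℝ), (0 : ℝ)) x :=
        (hasDerivAt_id x).prodMk (hasDerivAt_const x y)
      have happ : HasFDerivAt (fun p : ℝ × ℝ => fderiv ℝ f2 p (0, 1))
          ((ContinuousLinearMap.apply ℝ ℝ ((0 : ℝ), (1 : ℝ))).comp
            (fderiv ℝ (fderiv ℝ f2) (x, y))) (x, y) :=
        (ContinuousLinearMap.apply ℝ ℝ ((0 : ℝ), (1 : ℝ))).hasFDerivAt.comp _ hdd.hasFDerivAt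
      have hcomp : HasDerivAt (fun s => fderiv ℝ f2 (s, y) (0, 1))
          (fderiv ℝ (fderiv ℝ f2) (x, y) (1, 0) (0, 1)) x := by
          have := happ.comp_hasDerivAt x hcurve; exact this
      have heq : (fun s => py f s y) =ᶠ[nhds x] fun s => fderiv ℝ f2 (s, y) (0, 1) := by
        have : ∀ᶠ s in nhds x, ((s, y) : ℝ × ℝ) ∈ U := by
          have : ContinuousAt (fun s => ((s, y) : ℝ × ℝ)) x := by fun_prop
          exact this.preimage_mem_nhds hUx
        filter_upwards [this] with s hs
        exact hpygood (s, y) hs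
      exact hcomp.congr_of_eventuallyEq heq
    exact hder.deriv
  have h2 : py (px f) x y = fderiv ℝ (fderiv ℝ f2) (x, y) (0, 1) (1, 0) := by
    have hder : HasDerivAt (fun s => px f x s)
        ((fderiv ℝ (fderiv ℝ f2) (x, y)) (0, 1) (1, 0)) y := by
      have hcurve : HasDerivAt (fun s => ((x, s) : ℝ × ℝ)) ((0 : ℝ), (1 : ℝ)) y :=
        (hasDerivAt_const y x).prodMk (hasDerivAt_id y)
      have happ : HasFDerivAt (fun p : ℝ × ℝ => fderiv ℝ f2 p (1, 0))
          ((ContinuousLinearMap.apply ℝ ℝ ((1 : ℝ), (0 : ℝ))).comp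
            (fderiv ℝ (fderiv ℝ f2) (x, y))) (x, y) :=
        (ContinuousLinearMap.apply ℝ ℝ ((1 : ℝ), (0 : ℝ))).hasFDerivAt.comp _ hdd.hasFDerivAt
      have hcomp : HasDerivAt (fun s => fderiv ℝ f2 (x, s) (1, 0))
          (fderiv ℝ (fderiv ℝ f2) (x, y) (0, 1) (1, 0)) y := happ.comp_hasDerivAt y hcurve
      have heq : (fun s => px f x s) =ᶠ[nhds y] fun s => fderiv ℝ f2 (x, s) (1, 0) := by
        have : ∀ᶠ s in nhds y, ((x, s) : ℝ × ℝ) ∈ U := by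
          have : ContinuousAt (fun s => ((x, s) : ℝ × ℝ)) y := by fun_prop
          exact this.preimage_mem_nhds hUx
        filter_upwards [this] with s hs
        exact hpxgood (x, s) hs
      exact hcomp.congr_of_eventuallyEq heq
    exact hder.deriv
  rw [h1, h2, hsym]


/-- congruence for `py` on an open set -/
theorem pyCongrOn {g : ℝ → ℝ → ℝ} (hU : IsOpen U) (h : ∀ p ∈ U, f p.1 p.2 = g p.1 p.2)
    {x y : ℝ} (hp : (x, y) ∈ U) : py f x y = py g x y := by
  apply Filter.EventuallyEq.deriv_eq
  have hc : ContinuousAt (fun s => ((x, s) : ℝ × ℝ)) y := by fun_prop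
  filter_upwards [hc.preimage_mem_nhds (hU.mem_nhds hp)] with s hs
  exact h (x, s) hs

theorem pxq02 (hf : Smooth2On f U) (hU : IsOpen U) {x y : ℝ} (hp : (x, y) ∈ U) :
    px (py (py f)) x y = py (py (px f)) x y := by
  rw [schwarz2 (hf.py hU) hU hp]
  exact pyCongrOn hU (fun p hp' => schwarz2 hf hU (x := p.1) (y := p.2) hp') hp

theorem pxq03 (hf : Smooth2On f U) (hU : IsOpen U) {x y : ℝ} (hp : (x, y) ∈ U) :
    px (py (py (py f))) x y = py (py (py (px f))) x y := by
  rw [schwarz2 ((hf.py hU).py hU) hU hp]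
  exact pyCongrOn hU (fun p hp' => pxq02 hf hU (x := p.1) (y := p.2) hp') hp

end Toolkit


section Fside
variable {I J : Set ℝ} {ψ : ℝ → ℝ → ℝ} {y : ℝ → ℝ}

set_option maxHeartbeats 1000000 in
theorem Fside (hI : IsOpen I) (hJ : IsOpen J) (hψ : Smooth2On ψ (I ×ˢ J))
    (hy : ContDiffOn ℝ 4 y I) (hyJ : ∀ x ∈ I, y x ∈ J) :
    ∀ x ∈ I,
      deriv (fun s => ψ s (y s)) x
        = px ψ x (y x) + py ψ x (y x) * deriv y x
      ∧ iteratedDeriv 2 (fun s => ψ s (y s)) x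
        = px (px ψ) x (y x) + 2 * py (px ψ) x (y x) * deriv y x
          + py (py ψ) x (y x) * deriv y x ^ 2 + py ψ x (y x) * iteratedDeriv 2 y x
      ∧ iteratedDeriv 3 (fun s => ψ s (y s)) x
        = px (px (px ψ)) x (y x) + 3 * py (px (px ψ)) x (y x) * deriv y x
          + 3 * py (py (px ψ)) x (y x) * deriv y x ^ 2
          + py (py (py ψ)) x (y x) * deriv y x ^ 3
          + 3 * py (px ψ) x (y x) * iteratedDeriv 2 y x
          + 3 * py (py ψ) x (y x) * deriv y x * iteratedDeriv 2 y x
          + py ψ x (y x) * iteratedDeriv 3 y x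
      ∧ iteratedDeriv 4 (fun s => ψ s (y s)) x
        = px (px (px (px ψ))) x (y x) + 4 * py (px (px (px ψ))) x (y x) * deriv y x
          + 6 * py (py (px (px ψ))) x (y x) * deriv y x ^ 2
          + 4 * py (py (py (px ψ))) x (y x) * deriv y x ^ 3
          + py (py (py (py ψ))) x (y x) * deriv y x ^ 4
          + 6 * py (px (px ψ)) x (y x) * iteratedDeriv 2 y x
          + 12 * py (py (px ψ)) x (y x) * deriv y x * iteratedDeriv 2 y x
          + 6 * py (py (py ψ)) x (y x) * deriv y x ^ 2 * iteratedDeriv 2 y x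
          + 3 * py (py ψ) x (y x) * iteratedDeriv 2 y x ^ 2
          + 4 * py (px ψ) x (y x) * iteratedDeriv 3 y x
          + 4 * py (py ψ) x (y x) * deriv y x * iteratedDeriv 3 y x
          + py ψ x (y x) * iteratedDeriv 4 y x := by
  have hU : IsOpen (I ×ˢ J) := hI.prod hJ
  have hmem : ∀ s ∈ I, ((s, y s) : ℝ × ℝ) ∈ I ×ˢ J := fun s hs => ⟨hs, hyJ s hs⟩
  have s10 := hψ.px hU
  have s01 := hψ.py hU
  have s20 := s10.px hU
  have s11 := s10.py hU
  have s02 := s01.py hU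
  have s30 := s20.px hU
  have s21 := s20.py hU
  have s12 := s11.py hU
  have s03 := s02.py hU
  -- derivatives of y
  have h0 : ∀ s ∈ I, HasDerivAt y (deriv y s) s := fun s hs =>
    ((hy.differentiableOn (by norm_num)).differentiableAt (hI.mem_nhds hs)).hasDerivAt
  have hcd1 : ContDiffOn ℝ 3 (deriv y) I := hy.deriv_of_isOpen hI (by norm_num)
  have hcd2 : ContDiffOn ℝ 2 (deriv (deriv y)) I := hcd1.deriv_of_isOpen hI (by norm_num)
  have hcd3 : ContDiffOn ℝ 1 (deriv (deriv (deriv y))) I := hcd2.deriv_of_isOpen hI (by norm_num)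
  have e2 : iteratedDeriv 2 y = deriv (deriv y) := by
    funext t; rw [iteratedDeriv_succ, iteratedDeriv_one]
  have e3 : iteratedDeriv 3 y = deriv (deriv (deriv y)) := by
    funext t; rw [iteratedDeriv_succ, e2]
  have e4 : iteratedDeriv 4 y = deriv (deriv (deriv (deriv y))) := by
    funext t; rw [iteratedDeriv_succ, e3]
  have h1 : ∀ s ∈ I, HasDerivAt (deriv y) (iteratedDeriv 2 y s) s := fun s hs => by
    rw [e2]
    exact ((hcd1.differentiableOn (by norm_num)).differentiableAt (hI.mem_nhds hs)).hasDerivAt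
  have h2 : ∀ s ∈ I, HasDerivAt (iteratedDeriv 2 y) (iteratedDeriv 3 y s) s := fun s hs => by
    rw [e2, e3]
    exact ((hcd2.differentiableOn (by norm_num)).differentiableAt (hI.mem_nhds hs)).hasDerivAt
  have h3 : ∀ s ∈ I, HasDerivAt (iteratedDeriv 3 y) (iteratedDeriv 4 y s) s := fun s hs => by
    rw [e3, e4]
    exact ((hcd3.differentiableOn (by norm_num)).differentiableAt (hI.mem_nhds hs)).hasDerivAt
  -- chain rule engine
  have dc : ∀ (g : ℝ → ℝ → ℝ), Smooth2On g (I ×ˢ J) → ∀ s ∈ I,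
      HasDerivAt (fun t => g t (y t)) (px g s (y s) + py g s (y s) * deriv y s) s :=
    fun g hg s hs => hasDerivAt_comp2' hg hU (h0 s hs) (hmem s hs)
  -- level 1
  have c1 : ∀ s ∈ I, HasDerivAt (fun t => ψ t (y t))
      (px ψ s (y s) + py ψ s (y s) * deriv y s) s := dc ψ hψ
  -- level 2
  have c2 : ∀ s ∈ I, HasDerivAt (fun t => px ψ t (y t) + py ψ t (y t) * deriv y t)
      (px (px ψ) s (y s) + 2 * py (px ψ) s (y s) * deriv y s
        + py (py ψ) s (y s) * deriv y s ^ 2 + py ψ s (y s) * iteratedDeriv 2 y s) s := by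
    intro s hs
    have h := (dc (px ψ) s10 s hs).add ((dc (py ψ) s01 s hs).mul (h1 s hs))
    have hval : px (px ψ) s (y s) + py (px ψ) s (y s) * deriv y s
        + ((px (py ψ) s (y s) + py (py ψ) s (y s) * deriv y s) * deriv y s
          + py ψ s (y s) * iteratedDeriv 2 y s)
        = px (px ψ) s (y s) + 2 * py (px ψ) s (y s) * deriv y s
          + py (py ψ) s (y s) * deriv y s ^ 2 + py ψ s (y s) * iteratedDeriv 2 y s := by
      rw [schwarz2 hψ hU (hmem s hs)]; ring
    exact hval ▸ h
  -- level 3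
  have c3 : ∀ s ∈ I, HasDerivAt
      (fun t => px (px ψ) t (y t) + 2 * py (px ψ) t (y t) * deriv y t
        + py (py ψ) t (y t) * deriv y t ^ 2 + py ψ t (y t) * iteratedDeriv 2 y t)
      (px (px (px ψ)) s (y s) + 3 * py (px (px ψ)) s (y s) * deriv y s
        + 3 * py (py (px ψ)) s (y s) * deriv y s ^ 2
        + py (py (py ψ)) s (y s) * deriv y s ^ 3
        + 3 * py (px ψ) s (y s) * iteratedDeriv 2 y s
        + 3 * py (py ψ) s (y s) * deriv y s * iteratedDeriv 2 y s
        + py ψ s (y s) * iteratedDeriv 3 y s) s := by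
    intro s hs
    have t1 := dc (px (px ψ)) s20 s hs
    have t2 := ((dc (py (px ψ)) s11 s hs).mul (h1 s hs)).const_mul (2:ℝ)
    have t3 := (dc (py (py ψ)) s02 s hs).mul ((h1 s hs).pow 2)
    have t4 := (dc (py ψ) s01 s hs).mul (h2 s hs)
    have h := ((t1.add t2).add t3).add t4
    have heq : (fun t => px (px ψ) t (y t) + 2 * py (px ψ) t (y t) * deriv y t
        + py (py ψ) t (y t) * deriv y t ^ 2 + py ψ t (y t) * iteratedDeriv 2 y t)
        =ᶠ[nhds s] (fun t => px (px ψ) t (y t) + 2 * (py (px ψ) t (y t) * deriv y t)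
        + py (py ψ) t (y t) * deriv y t ^ 2 + py ψ t (y t) * iteratedDeriv 2 y t) :=
      Filter.Eventually.of_forall fun t => by ring
    have h' := h.congr_of_eventuallyEq heq
    refine h'.congr_deriv ?_
    simp only [Pi.pow_apply, Pi.mul_apply]
    rw [schwarz2 s10 hU (hmem s hs), schwarz2 hψ hU (hmem s hs), pxq02 hψ hU (hmem s hs)]
    push_cast
    ring
  -- level 4
  have c4 : ∀ s ∈ I, HasDerivAt
      (fun t => px (px (px ψ)) t (y t) + 3 * py (px (px ψ)) t (y t) * deriv y t
        + 3 * py (py (px ψ)) t (y t) * deriv y t ^ 2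
        + py (py (py ψ)) t (y t) * deriv y t ^ 3
        + 3 * py (px ψ) t (y t) * iteratedDeriv 2 y t
        + 3 * py (py ψ) t (y t) * deriv y t * iteratedDeriv 2 y t
        + py ψ t (y t) * iteratedDeriv 3 y t)
      (px (px (px (px ψ))) s (y s) + 4 * py (px (px (px ψ))) s (y s) * deriv y s
        + 6 * py (py (px (px ψ))) s (y s) * deriv y s ^ 2
        + 4 * py (py (py (px ψ))) s (y s) * deriv y s ^ 3
        + py (py (py (py ψ))) s (y s) * deriv y s ^ 4
        + 6 * py (px (px ψ)) s (y s) * iteratedDeriv 2 y s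
        + 12 * py (py (px ψ)) s (y s) * deriv y s * iteratedDeriv 2 y s
        + 6 * py (py (py ψ)) s (y s) * deriv y s ^ 2 * iteratedDeriv 2 y s
        + 3 * py (py ψ) s (y s) * iteratedDeriv 2 y s ^ 2
        + 4 * py (px ψ) s (y s) * iteratedDeriv 3 y s
        + 4 * py (py ψ) s (y s) * deriv y s * iteratedDeriv 3 y s
        + py ψ s (y s) * iteratedDeriv 4 y s) s := by
    intro s hs
    have t1 := dc (px (px (px ψ))) s30 s hs
    have t2 := ((dc (py (px (px ψ))) s21 s hs).mul (h1 s hs)).const_mul (3:ℝ)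
    have t3 := ((dc (py (py (px ψ))) s12 s hs).mul ((h1 s hs).pow 2)).const_mul (3:ℝ)
    have t4 := (dc (py (py (py ψ))) s03 s hs).mul ((h1 s hs).pow 3)
    have t5 := ((dc (py (px ψ)) s11 s hs).mul (h2 s hs)).const_mul (3:ℝ)
    have t6 := (((dc (py (py ψ)) s02 s hs).mul (h1 s hs)).mul (h2 s hs)).const_mul (3:ℝ)
    have t7 := (dc (py ψ) s01 s hs).mul (h3 s hs)
    have h := (((((t1.add t2).add t3).add t4).add t5).add t6).add t7
    have heq : (fun t => px (px (px ψ)) t (y t) + 3 * py (px (px ψ)) t (y t) * deriv y t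
        + 3 * py (py (px ψ)) t (y t) * deriv y t ^ 2
        + py (py (py ψ)) t (y t) * deriv y t ^ 3
        + 3 * py (px ψ) t (y t) * iteratedDeriv 2 y t
        + 3 * py (py ψ) t (y t) * deriv y t * iteratedDeriv 2 y t
        + py ψ t (y t) * iteratedDeriv 3 y t)
        =ᶠ[nhds s] (fun t => px (px (px ψ)) t (y t) + 3 * (py (px (px ψ)) t (y t) * deriv y t)
        + 3 * (py (py (px ψ)) t (y t) * deriv y t ^ 2)
        + py (py (py ψ)) t (y t) * deriv y t ^ 3
        + 3 * (py (px ψ) t (y t) * iteratedDeriv 2 y t)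
        + 3 * (py (py ψ) t (y t) * deriv y t * iteratedDeriv 2 y t)
        + py ψ t (y t) * iteratedDeriv 3 y t) :=
      Filter.Eventually.of_forall fun t => by ring
    have h' := h.congr_of_eventuallyEq heq
    refine h'.congr_deriv ?_
    simp only [Pi.pow_apply, Pi.mul_apply]
    rw [schwarz2 s20 hU (hmem s hs), schwarz2 s10 hU (hmem s hs),
      schwarz2 hψ hU (hmem s hs), pxq02 s10 hU (hmem s hs), pxq02 hψ hU (hmem s hs),
      pxq03 hψ hU (hmem s hs)]
    push_cast
    ring
  -- assemble
  have hF1 : ∀ s ∈ I, deriv (fun t => ψ t (y t)) s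
      = px ψ s (y s) + py ψ s (y s) * deriv y s := fun s hs => (c1 s hs).deriv
  have hF2 : ∀ s ∈ I, iteratedDeriv 2 (fun t => ψ t (y t)) s
      = px (px ψ) s (y s) + 2 * py (px ψ) s (y s) * deriv y s
        + py (py ψ) s (y s) * deriv y s ^ 2 + py ψ s (y s) * iteratedDeriv 2 y s := by
    intro s hs
    have hd : deriv (deriv (fun t => ψ t (y t))) s
        = deriv (fun t => px ψ t (y t) + py ψ t (y t) * deriv y t) s := by
      apply Filter.EventuallyEq.deriv_eq
      filter_upwards [hI.mem_nhds hs] with t ht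
      exact hF1 t ht
    rw [iteratedDeriv_succ, iteratedDeriv_one, hd, (c2 s hs).deriv]
  have hF3 : ∀ s ∈ I, iteratedDeriv 3 (fun t => ψ t (y t)) s
      = px (px (px ψ)) s (y s) + 3 * py (px (px ψ)) s (y s) * deriv y s
        + 3 * py (py (px ψ)) s (y s) * deriv y s ^ 2
        + py (py (py ψ)) s (y s) * deriv y s ^ 3
        + 3 * py (px ψ) s (y s) * iteratedDeriv 2 y s
        + 3 * py (py ψ) s (y s) * deriv y s * iteratedDeriv 2 y s
        + py ψ s (y s) * iteratedDeriv 3 y s := by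
    intro s hs
    have hd : deriv (iteratedDeriv 2 (fun t => ψ t (y t))) s
        = deriv (fun t => px (px ψ) t (y t) + 2 * py (px ψ) t (y t) * deriv y t
            + py (py ψ) t (y t) * deriv y t ^ 2 + py ψ t (y t) * iteratedDeriv 2 y t) s := by
      apply Filter.EventuallyEq.deriv_eq
      filter_upwards [hI.mem_nhds hs] with t ht
      exact hF2 t ht
    rw [iteratedDeriv_succ, hd, (c3 s hs).deriv]
  have hF4 : ∀ s ∈ I, iteratedDeriv 4 (fun t => ψ t (y t)) s
      = px (px (px (px ψ))) s (y s) + 4 * py (px (px (px ψ))) s (y s) * deriv y s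
        + 6 * py (py (px (px ψ))) s (y s) * deriv y s ^ 2
        + 4 * py (py (py (px ψ))) s (y s) * deriv y s ^ 3
        + py (py (py (py ψ))) s (y s) * deriv y s ^ 4
        + 6 * py (px (px ψ)) s (y s) * iteratedDeriv 2 y s
        + 12 * py (py (px ψ)) s (y s) * deriv y s * iteratedDeriv 2 y s
        + 6 * py (py (py ψ)) s (y s) * deriv y s ^ 2 * iteratedDeriv 2 y s
        + 3 * py (py ψ) s (y s) * iteratedDeriv 2 y s ^ 2
        + 4 * py (px ψ) s (y s) * iteratedDeriv 3 y s
        + 4 * py (py ψ) s (y s) * deriv y s * iteratedDeriv 3 y s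
        + py ψ s (y s) * iteratedDeriv 4 y s := by
    intro s hs
    have hd : deriv (iteratedDeriv 3 (fun t => ψ t (y t))) s
        = deriv (fun t => px (px (px ψ)) t (y t) + 3 * py (px (px ψ)) t (y t) * deriv y t
            + 3 * py (py (px ψ)) t (y t) * deriv y t ^ 2
            + py (py (py ψ)) t (y t) * deriv y t ^ 3
            + 3 * py (px ψ) t (y t) * iteratedDeriv 2 y t
            + 3 * py (py ψ) t (y t) * deriv y t * iteratedDeriv 2 y t
            + py ψ t (y t) * iteratedDeriv 3 y t) s := by
      apply Filter.EventuallyEq.deriv_eq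
      filter_upwards [hI.mem_nhds hs] with t ht
      exact hF3 t ht
    rw [iteratedDeriv_succ, hd, (c4 s hs).deriv]
  exact fun x hx => ⟨hF1 x hx, hF2 x hx, hF3 x hx, hF4 x hx⟩

end Fside


section Uside
variable {I W : Set ℝ} {φ u : ℝ → ℝ}

set_option maxHeartbeats 1000000 in
theorem Uside (hI : IsOpen I) (hW : IsOpen W)
    (hφ : ContDiffOn ℝ (⊤ : ℕ∞) φ I) (hmaps : ∀ x ∈ I, φ x ∈ W)
    (hu : ContDiffOn ℝ 4 u W) :
    ∀ x ∈ I,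
      deriv (fun s => u (φ s)) x = deriv u (φ x) * deriv φ x
      ∧ iteratedDeriv 2 (fun s => u (φ s)) x
        = iteratedDeriv 2 u (φ x) * deriv φ x ^ 2 + deriv u (φ x) * iteratedDeriv 2 φ x
      ∧ iteratedDeriv 3 (fun s => u (φ s)) x
        = iteratedDeriv 3 u (φ x) * deriv φ x ^ 3
          + 3 * iteratedDeriv 2 u (φ x) * deriv φ x * iteratedDeriv 2 φ x
          + deriv u (φ x) * iteratedDeriv 3 φ x
      ∧ iteratedDeriv 4 (fun s => u (φ s)) x
        = iteratedDeriv 4 u (φ x) * deriv φ x ^ 4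
          + 6 * iteratedDeriv 3 u (φ x) * deriv φ x ^ 2 * iteratedDeriv 2 φ x
          + iteratedDeriv 2 u (φ x)
            * (4 * deriv φ x * iteratedDeriv 3 φ x + 3 * iteratedDeriv 2 φ x ^ 2)
          + deriv u (φ x) * iteratedDeriv 4 φ x := by
  -- derivatives of φ
  have hp0 : ∀ s ∈ I, HasDerivAt φ (deriv φ s) s := fun s hs =>
    ((hφ.differentiableOn (by norm_num)).differentiableAt (hI.mem_nhds hs)).hasDerivAt
  have htop : ((⊤ : ℕ∞) : WithTop ℕ∞) + 1 ≤ ((⊤ : ℕ∞) : WithTop ℕ∞) := by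
    rw [← WithTop.coe_one, ← WithTop.coe_add, top_add]
  have hφ1 : ContDiffOn ℝ (⊤ : ℕ∞) (deriv φ) I := hφ.deriv_of_isOpen hI htop
  have hφ2 : ContDiffOn ℝ (⊤ : ℕ∞) (deriv (deriv φ)) I := hφ1.deriv_of_isOpen hI htop
  have hφ3 : ContDiffOn ℝ (⊤ : ℕ∞) (deriv (deriv (deriv φ))) I := hφ2.deriv_of_isOpen hI htop
  have e2 : iteratedDeriv 2 φ = deriv (deriv φ) := by
    funext t; rw [iteratedDeriv_succ, iteratedDeriv_one]
  have e3 : iteratedDeriv 3 φ = deriv (deriv (deriv φ)) := by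
    funext t; rw [iteratedDeriv_succ, e2]
  have e4 : iteratedDeriv 4 φ = deriv (deriv (deriv (deriv φ))) := by
    funext t; rw [iteratedDeriv_succ, e3]
  have hp1 : ∀ s ∈ I, HasDerivAt (deriv φ) (iteratedDeriv 2 φ s) s := fun s hs => by
    rw [e2]
    exact ((hφ1.differentiableOn (by norm_num)).differentiableAt (hI.mem_nhds hs)).hasDerivAt
  have hp2 : ∀ s ∈ I, HasDerivAt (iteratedDeriv 2 φ) (iteratedDeriv 3 φ s) s := fun s hs => by
    rw [e2, e3]
    exact ((hφ2.differentiableOn (by norm_num)).differentiableAt (hI.mem_nhds hs)).hasDerivAt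
  have hp3 : ∀ s ∈ I, HasDerivAt (iteratedDeriv 3 φ) (iteratedDeriv 4 φ s) s := fun s hs => by
    rw [e3, e4]
    exact ((hφ3.differentiableOn (by norm_num)).differentiableAt (hI.mem_nhds hs)).hasDerivAt
  -- derivatives of u
  have hu1 : ContDiffOn ℝ 3 (deriv u) W := hu.deriv_of_isOpen hW (by norm_num)
  have hu2 : ContDiffOn ℝ 2 (deriv (deriv u)) W := hu1.deriv_of_isOpen hW (by norm_num)
  have hu3 : ContDiffOn ℝ 1 (deriv (deriv (deriv u))) W := hu2.deriv_of_isOpen hW (by norm_num)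
  have f2 : iteratedDeriv 2 u = deriv (deriv u) := by
    funext t; rw [iteratedDeriv_succ, iteratedDeriv_one]
  have f3 : iteratedDeriv 3 u = deriv (deriv (deriv u)) := by
    funext t; rw [iteratedDeriv_succ, f2]
  have f4 : iteratedDeriv 4 u = deriv (deriv (deriv (deriv u))) := by
    funext t; rw [iteratedDeriv_succ, f3]
  have hd0 : ∀ w ∈ W, HasDerivAt u (deriv u w) w := fun w hw =>
    ((hu.differentiableOn (by norm_num)).differentiableAt (hW.mem_nhds hw)).hasDerivAt
  have hd1 : ∀ w ∈ W, HasDerivAt (deriv u) (iteratedDeriv 2 u w) w := fun w hw => by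
    rw [f2]
    exact ((hu1.differentiableOn (by norm_num)).differentiableAt (hW.mem_nhds hw)).hasDerivAt
  have hd2 : ∀ w ∈ W, HasDerivAt (iteratedDeriv 2 u) (iteratedDeriv 3 u w) w := fun w hw => by
    rw [f2, f3]
    exact ((hu2.differentiableOn (by norm_num)).differentiableAt (hW.mem_nhds hw)).hasDerivAt
  have hd3 : ∀ w ∈ W, HasDerivAt (iteratedDeriv 3 u) (iteratedDeriv 4 u w) w := fun w hw => by
    rw [f3, f4]
    exact ((hu3.differentiableOn (by norm_num)).differentiableAt (hW.mem_nhds hw)).hasDerivAt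
  -- compositions
  have comp0 : ∀ s ∈ I, HasDerivAt (fun t => u (φ t)) (deriv u (φ s) * deriv φ s) s :=
    fun s hs => (hd0 (φ s) (hmaps s hs)).comp s (hp0 s hs)
  have comp1 : ∀ s ∈ I, HasDerivAt (fun t => deriv u (φ t))
      (iteratedDeriv 2 u (φ s) * deriv φ s) s :=
    fun s hs => (hd1 (φ s) (hmaps s hs)).comp s (hp0 s hs)
  have comp2 : ∀ s ∈ I, HasDerivAt (fun t => iteratedDeriv 2 u (φ t))
      (iteratedDeriv 3 u (φ s) * deriv φ s) s :=
    fun s hs => (hd2 (φ s) (hmaps s hs)).comp s (hp0 s hs)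
  have comp3 : ∀ s ∈ I, HasDerivAt (fun t => iteratedDeriv 3 u (φ t))
      (iteratedDeriv 4 u (φ s) * deriv φ s) s :=
    fun s hs => (hd3 (φ s) (hmaps s hs)).comp s (hp0 s hs)
  -- level 2
  have c2 : ∀ s ∈ I, HasDerivAt (fun t => deriv u (φ t) * deriv φ t)
      (iteratedDeriv 2 u (φ s) * deriv φ s ^ 2 + deriv u (φ s) * iteratedDeriv 2 φ s) s := by
    intro s hs
    have h := (comp1 s hs).mul (hp1 s hs)
    have hval : iteratedDeriv 2 u (φ s) * deriv φ s * deriv φ s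
        + deriv u (φ s) * iteratedDeriv 2 φ s
        = iteratedDeriv 2 u (φ s) * deriv φ s ^ 2 + deriv u (φ s) * iteratedDeriv 2 φ s := by
      ring
    exact hval ▸ h
  -- level 3
  have c3 : ∀ s ∈ I, HasDerivAt
      (fun t => iteratedDeriv 2 u (φ t) * deriv φ t ^ 2 + deriv u (φ t) * iteratedDeriv 2 φ t)
      (iteratedDeriv 3 u (φ s) * deriv φ s ^ 3
        + 3 * iteratedDeriv 2 u (φ s) * deriv φ s * iteratedDeriv 2 φ s
        + deriv u (φ s) * iteratedDeriv 3 φ s) s := by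
    intro s hs
    have h := ((comp2 s hs).mul ((hp1 s hs).pow 2)).add ((comp1 s hs).mul (hp2 s hs))
    refine h.congr_deriv ?_
    simp only [Pi.pow_apply, Pi.mul_apply]
    push_cast
    ring
  -- level 4
  have c4 : ∀ s ∈ I, HasDerivAt
      (fun t => iteratedDeriv 3 u (φ t) * deriv φ t ^ 3
        + 3 * iteratedDeriv 2 u (φ t) * deriv φ t * iteratedDeriv 2 φ t
        + deriv u (φ t) * iteratedDeriv 3 φ t)
      (iteratedDeriv 4 u (φ s) * deriv φ s ^ 4
        + 6 * iteratedDeriv 3 u (φ s) * deriv φ s ^ 2 * iteratedDeriv 2 φ s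
        + iteratedDeriv 2 u (φ s)
          * (4 * deriv φ s * iteratedDeriv 3 φ s + 3 * iteratedDeriv 2 φ s ^ 2)
        + deriv u (φ s) * iteratedDeriv 4 φ s) s := by
    intro s hs
    have t1 := (comp3 s hs).mul ((hp1 s hs).pow 3)
    have t2 := (((comp2 s hs).mul (hp1 s hs)).mul (hp2 s hs)).const_mul (3:ℝ)
    have t3 := (comp1 s hs).mul (hp3 s hs)
    have h := (t1.add t2).add t3
    have heq : (fun t => iteratedDeriv 3 u (φ t) * deriv φ t ^ 3
        + 3 * iteratedDeriv 2 u (φ t) * deriv φ t * iteratedDeriv 2 φ t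
        + deriv u (φ t) * iteratedDeriv 3 φ t)
        =ᶠ[nhds s] (fun t => iteratedDeriv 3 u (φ t) * deriv φ t ^ 3
        + 3 * (iteratedDeriv 2 u (φ t) * deriv φ t * iteratedDeriv 2 φ t)
        + deriv u (φ t) * iteratedDeriv 3 φ t) :=
      Filter.Eventually.of_forall fun t => by ring
    have h' := h.congr_of_eventuallyEq heq
    refine h'.congr_deriv ?_
    simp only [Pi.pow_apply, Pi.mul_apply]
    push_cast
    ring
  -- assemble
  have hU1 : ∀ s ∈ I, deriv (fun t => u (φ t)) s = deriv u (φ s) * deriv φ s :=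
    fun s hs => (comp0 s hs).deriv
  have hU2 : ∀ s ∈ I, iteratedDeriv 2 (fun t => u (φ t)) s
      = iteratedDeriv 2 u (φ s) * deriv φ s ^ 2 + deriv u (φ s) * iteratedDeriv 2 φ s := by
    intro s hs
    have hd : deriv (deriv (fun t => u (φ t))) s
        = deriv (fun t => deriv u (φ t) * deriv φ t) s := by
      apply Filter.EventuallyEq.deriv_eq
      filter_upwards [hI.mem_nhds hs] with t ht
      exact hU1 t ht
    rw [iteratedDeriv_succ, iteratedDeriv_one, hd, (c2 s hs).deriv]
  have hU3 : ∀ s ∈ I, iteratedDeriv 3 (fun t => u (φ t)) s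
      = iteratedDeriv 3 u (φ s) * deriv φ s ^ 3
        + 3 * iteratedDeriv 2 u (φ s) * deriv φ s * iteratedDeriv 2 φ s
        + deriv u (φ s) * iteratedDeriv 3 φ s := by
    intro s hs
    have hd : deriv (iteratedDeriv 2 (fun t => u (φ t))) s
        = deriv (fun t => iteratedDeriv 2 u (φ t) * deriv φ t ^ 2
            + deriv u (φ t) * iteratedDeriv 2 φ t) s := by
      apply Filter.EventuallyEq.deriv_eq
      filter_upwards [hI.mem_nhds hs] with t ht
      exact hU2 t ht
    rw [iteratedDeriv_succ, hd, (c3 s hs).deriv]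
  have hU4 : ∀ s ∈ I, iteratedDeriv 4 (fun t => u (φ t)) s
      = iteratedDeriv 4 u (φ s) * deriv φ s ^ 4
        + 6 * iteratedDeriv 3 u (φ s) * deriv φ s ^ 2 * iteratedDeriv 2 φ s
        + iteratedDeriv 2 u (φ s)
          * (4 * deriv φ s * iteratedDeriv 3 φ s + 3 * iteratedDeriv 2 φ s ^ 2)
        + deriv u (φ s) * iteratedDeriv 4 φ s := by
    intro s hs
    have hd : deriv (iteratedDeriv 3 (fun t => u (φ t))) s
        = deriv (fun t => iteratedDeriv 3 u (φ t) * deriv φ t ^ 3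
            + 3 * iteratedDeriv 2 u (φ t) * deriv φ t * iteratedDeriv 2 φ t
            + deriv u (φ t) * iteratedDeriv 3 φ t) s := by
      apply Filter.EventuallyEq.deriv_eq
      filter_upwards [hI.mem_nhds hs] with t ht
      exact hU3 t ht
    rw [iteratedDeriv_succ, hd, (c4 s hs).deriv]
  exact fun x hx => ⟨hU1 x hx, hU2 x hx, hU3 x hx, hU4 x hx⟩

end Uside


set_option maxHeartbeats 2000000 in
theorem key_identity
    (p1 p2 p3 p4 P00 P10 P01 P20 P11 P02 P30 P21 P12 P03 P40 P31 P22 P13 P04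
      y1 y2 y3 y4 U0 U1 U2 U3 U4 a b : ℝ)
    (hp1 : p1 ≠ 0) (hP01 : P01 ≠ 0)
    (hU0 : U0 = P00)
    (e1 : P10 + P01 * y1 = U1 * p1)
    (e2 : P20 + 2 * P11 * y1 + P02 * y1 ^ 2 + P01 * y2 = U2 * p1 ^ 2 + U1 * p2)
    (e3 : P30 + 3 * P21 * y1 + 3 * P12 * y1 ^ 2 + P03 * y1 ^ 3 + 3 * P11 * y2
        + 3 * P02 * y1 * y2 + P01 * y3
      = U3 * p1 ^ 3 + 3 * U2 * p1 * p2 + U1 * p3)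
    (e4 : P40 + 4 * P31 * y1 + 6 * P22 * y1 ^ 2 + 4 * P13 * y1 ^ 3 + P04 * y1 ^ 4
        + 6 * P21 * y2 + 12 * P12 * y1 * y2 + 6 * P03 * y1 ^ 2 * y2 + 3 * P02 * y2 ^ 2
        + 4 * P11 * y3 + 4 * P02 * y1 * y3 + P01 * y4
      = U4 * p1 ^ 4 + 6 * U3 * p1 ^ 2 * p2 + U2 * (4 * p1 * p3 + 3 * p2 ^ 2) + U1 * p4) :
    y4 + ((4 * P02 / P01) * y1
        + (-2 * (3 * p2 * P01 - 2 * p1 * P11) / (p1 * P01))) * y3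
      + (3 * P02 / P01) * y2 ^ 2
      + ((6 * P03 / P01) * y1 ^ 2
        + (-6 * (3 * p2 * P02 - 2 * p1 * P12) / (p1 * P01)) * y1
        + (-(((4 * p3 * p1 - 15 * p2 ^ 2) * P01
            + 6 * (3 * p2 * P11 - p1 * P21) * p1) / (p1 ^ 2 * P01)))) * y2
      + (P04 / P01) * y1 ^ 4
      + (-2 * (3 * p2 * P03 - 2 * p1 * P13) / (p1 * P01)) * y1 ^ 3
      + (-((4 * p3 * p1 * P02 - 15 * p2 ^ 2 * P02 + 18 * p2 * p1 * P12
          - 6 * p1 ^ 2 * P22) / (p1 ^ 2 * P01))) * y1 ^ 2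
      + (-((3 * (5 * p2 ^ 2 * P01 - 10 * p2 * p1 * P11 + 6 * p1 ^ 2 * P21) * p2
          - (p1 ^ 3 * P01 * a + 4 * P31) * p1 ^ 3
          - 2 * (5 * p2 * P01 - 4 * p1 * P11) * p3 * p1
          + p4 * p1 ^ 2 * P01) / (p1 ^ 3 * P01))) * y1
      + (-(((15 * p2 ^ 3 - p1 ^ 6 * a + p4 * p1 ^ 2) * P10
          - (10 * p3 * p2 * P10 - 4 * p3 * p1 * P20 + 15 * p2 ^ 2 * P20
            - 6 * p2 * p1 * P30 + p1 ^ 6 * b * P00 + p1 ^ 2 * P40) * p1)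
          / (p1 ^ 3 * P01)))
    = p1 ^ 4 / P01 * (U4 + a * U1 + b * U0) := by
  have hu1 : U1 = (P10 + P01 * y1) / p1 := by
    rw [eq_div_iff hp1]; linear_combination -e1
  have hu2 : U2 = ((P20 + 2 * P11 * y1 + P02 * y1 ^ 2 + P01 * y2) - U1 * p2) / p1 ^ 2 := by
    rw [eq_div_iff (pow_ne_zero 2 hp1)]; linear_combination -e2
  have hu3 : U3 = ((P30 + 3 * P21 * y1 + 3 * P12 * y1 ^ 2 + P03 * y1 ^ 3 + 3 * P11 * y2
      + 3 * P02 * y1 * y2 + P01 * y3) - 3 * U2 * p1 * p2 - U1 * p3) / p1 ^ 3 := by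
    rw [eq_div_iff (pow_ne_zero 3 hp1)]; linear_combination -e3
  have hu4 : U4 = ((P40 + 4 * P31 * y1 + 6 * P22 * y1 ^ 2 + 4 * P13 * y1 ^ 3 + P04 * y1 ^ 4
      + 6 * P21 * y2 + 12 * P12 * y1 * y2 + 6 * P03 * y1 ^ 2 * y2 + 3 * P02 * y2 ^ 2
      + 4 * P11 * y3 + 4 * P02 * y1 * y3 + P01 * y4)
      - 6 * U3 * p1 ^ 2 * p2 - U2 * (4 * p1 * p3 + 3 * p2 ^ 2) - U1 * p4) / p1 ^ 4 := by
    rw [eq_div_iff (pow_ne_zero 4 hp1)]; linear_combination -e4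
  rw [hu4, hu3, hu2, hu1, hU0]
  field_simp
  ring


section Central
variable {I J W : Set ℝ} {φ u : ℝ → ℝ} {ψ : ℝ → ℝ → ℝ} {y : ℝ → ℝ} {a b : ℝ → ℝ}

set_option maxHeartbeats 2000000 in
theorem central (hI : IsOpen I) (hJ : IsOpen J)
    (hφ : ContDiffOn ℝ (⊤ : ℕ∞) φ I) (hφx : ∀ x ∈ I, deriv φ x ≠ 0)
    (hψ : Smooth2On ψ (I ×ˢ J)) (hψy : ∀ x ∈ I, ∀ z ∈ J, py ψ x z ≠ 0)
    (hy : ContDiffOn ℝ 4 y I) (hyJ : ∀ x ∈ I, y x ∈ J)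
    (hW : IsOpen W) (hmaps : ∀ x ∈ I, φ x ∈ W) (hu : ContDiffOn ℝ 4 u W)
    (huφ : ∀ x ∈ I, u (φ x) = ψ x (y x)) :
    ∀ x ∈ I,
      iteratedDeriv 4 y x
        + ((4 * py (py ψ) x (y x) / py ψ x (y x)) * deriv y x
          + (-2 * (3 * iteratedDeriv 2 φ x * py ψ x (y x)
              - 2 * deriv φ x * py (px ψ) x (y x)) / (deriv φ x * py ψ x (y x))))
          * iteratedDeriv 3 y x
        + (3 * py (py ψ) x (y x) / py ψ x (y x)) * iteratedDeriv 2 y x ^ 2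
        + ((6 * py (py (py ψ)) x (y x) / py ψ x (y x)) * deriv y x ^ 2
          + (-6 * (3 * iteratedDeriv 2 φ x * py (py ψ) x (y x)
              - 2 * deriv φ x * py (py (px ψ)) x (y x)) / (deriv φ x * py ψ x (y x)))
            * deriv y x
          + (-(((4 * iteratedDeriv 3 φ x * deriv φ x - 15 * iteratedDeriv 2 φ x ^ 2)
                * py ψ x (y x)
              + 6 * (3 * iteratedDeriv 2 φ x * py (px ψ) x (y x)
                - deriv φ x * py (px (px ψ)) x (y x)) * deriv φ x)
            / (deriv φ x ^ 2 * py ψ x (y x))))) * iteratedDeriv 2 y x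
        + (py (py (py (py ψ))) x (y x) / py ψ x (y x)) * deriv y x ^ 4
        + (-2 * (3 * iteratedDeriv 2 φ x * py (py (py ψ)) x (y x)
            - 2 * deriv φ x * py (py (py (px ψ))) x (y x)) / (deriv φ x * py ψ x (y x)))
          * deriv y x ^ 3
        + (-((4 * iteratedDeriv 3 φ x * deriv φ x * py (py ψ) x (y x)
            - 15 * iteratedDeriv 2 φ x ^ 2 * py (py ψ) x (y x)
            + 18 * iteratedDeriv 2 φ x * deriv φ x * py (py (px ψ)) x (y x)
            - 6 * deriv φ x ^ 2 * py (py (px (px ψ))) x (y x))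
          / (deriv φ x ^ 2 * py ψ x (y x)))) * deriv y x ^ 2
        + (-((3 * (5 * iteratedDeriv 2 φ x ^ 2 * py ψ x (y x)
              - 10 * iteratedDeriv 2 φ x * deriv φ x * py (px ψ) x (y x)
              + 6 * deriv φ x ^ 2 * py (px (px ψ)) x (y x)) * iteratedDeriv 2 φ x
            - (deriv φ x ^ 3 * py ψ x (y x) * a x + 4 * py (px (px (px ψ))) x (y x))
              * deriv φ x ^ 3
            - 2 * (5 * iteratedDeriv 2 φ x * py ψ x (y x)
              - 4 * deriv φ x * py (px ψ) x (y x)) * iteratedDeriv 3 φ x * deriv φ x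
            + iteratedDeriv 4 φ x * deriv φ x ^ 2 * py ψ x (y x))
          / (deriv φ x ^ 3 * py ψ x (y x)))) * deriv y x
        + (-(((15 * iteratedDeriv 2 φ x ^ 3 - deriv φ x ^ 6 * a x
              + iteratedDeriv 4 φ x * deriv φ x ^ 2) * px ψ x (y x)
            - (10 * iteratedDeriv 3 φ x * iteratedDeriv 2 φ x * px ψ x (y x)
              - 4 * iteratedDeriv 3 φ x * deriv φ x * px (px ψ) x (y x)
              + 15 * iteratedDeriv 2 φ x ^ 2 * px (px ψ) x (y x)
              - 6 * iteratedDeriv 2 φ x * deriv φ x * px (px (px ψ)) x (y x)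
              + deriv φ x ^ 6 * b x * ψ x (y x)
              + deriv φ x ^ 2 * px (px (px (px ψ))) x (y x)) * deriv φ x)
          / (deriv φ x ^ 3 * py ψ x (y x))))
      = deriv φ x ^ 4 / py ψ x (y x)
        * (iteratedDeriv 4 u (φ x) + a x * deriv u (φ x) + b x * u (φ x)) := by
  intro x hx
  obtain ⟨hF1, hF2, hF3, hF4⟩ := Fside hI hJ hψ hy hyJ x hx
  obtain ⟨hG1, hG2, hG3, hG4⟩ := Uside hI hW hφ hmaps hu x hx
  have hEqOn : Set.EqOn (fun s => u (φ s)) (fun s => ψ s (y s)) I := fun s hs => huφ s hs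
  have hEq1 : deriv (fun s => u (φ s)) x = deriv (fun s => ψ s (y s)) x := by
    apply Filter.EventuallyEq.deriv_eq
    filter_upwards [hI.mem_nhds hx] with t ht
    exact huφ t ht
  have hEq2 := (hEqOn.iteratedDeriv_of_isOpen hI 2) hx
  have hEq3 := (hEqOn.iteratedDeriv_of_isOpen hI 3) hx
  have hEq4 := (hEqOn.iteratedDeriv_of_isOpen hI 4) hx
  have e1 := (hF1.symm.trans hEq1.symm).trans hG1
  have e2 := (hF2.symm.trans hEq2.symm).trans hG2
  have e3 := (hF3.symm.trans hEq3.symm).trans hG3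
  have e4 := (hF4.symm.trans hEq4.symm).trans hG4
  have e1' : px ψ x (y x) + py ψ x (y x) * deriv y x = deriv u (φ x) * deriv φ x := by
    linear_combination e1
  have e2' : px (px ψ) x (y x) + 2 * py (px ψ) x (y x) * deriv y x
      + py (py ψ) x (y x) * deriv y x ^ 2 + py ψ x (y x) * iteratedDeriv 2 y x
      = iteratedDeriv 2 u (φ x) * deriv φ x ^ 2 + deriv u (φ x) * iteratedDeriv 2 φ x := by
    linear_combination e2
  have e3' : px (px (px ψ)) x (y x) + 3 * py (px (px ψ)) x (y x) * deriv y x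
      + 3 * py (py (px ψ)) x (y x) * deriv y x ^ 2
      + py (py (py ψ)) x (y x) * deriv y x ^ 3
      + 3 * py (px ψ) x (y x) * iteratedDeriv 2 y x
      + 3 * py (py ψ) x (y x) * deriv y x * iteratedDeriv 2 y x
      + py ψ x (y x) * iteratedDeriv 3 y x
      = iteratedDeriv 3 u (φ x) * deriv φ x ^ 3
        + 3 * iteratedDeriv 2 u (φ x) * deriv φ x * iteratedDeriv 2 φ x
        + deriv u (φ x) * iteratedDeriv 3 φ x := by
    linear_combination e3
  have e4' : px (px (px (px ψ))) x (y x) + 4 * py (px (px (px ψ))) x (y x) * deriv y x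
      + 6 * py (py (px (px ψ))) x (y x) * deriv y x ^ 2
      + 4 * py (py (py (px ψ))) x (y x) * deriv y x ^ 3
      + py (py (py (py ψ))) x (y x) * deriv y x ^ 4
      + 6 * py (px (px ψ)) x (y x) * iteratedDeriv 2 y x
      + 12 * py (py (px ψ)) x (y x) * deriv y x * iteratedDeriv 2 y x
      + 6 * py (py (py ψ)) x (y x) * deriv y x ^ 2 * iteratedDeriv 2 y x
      + 3 * py (py ψ) x (y x) * iteratedDeriv 2 y x ^ 2
      + 4 * py (px ψ) x (y x) * iteratedDeriv 3 y x
      + 4 * py (py ψ) x (y x) * deriv y x * iteratedDeriv 3 y x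
      + py ψ x (y x) * iteratedDeriv 4 y x
      = iteratedDeriv 4 u (φ x) * deriv φ x ^ 4
        + 6 * iteratedDeriv 3 u (φ x) * deriv φ x ^ 2 * iteratedDeriv 2 φ x
        + iteratedDeriv 2 u (φ x)
          * (4 * deriv φ x * iteratedDeriv 3 φ x + 3 * iteratedDeriv 2 φ x ^ 2)
        + deriv u (φ x) * iteratedDeriv 4 φ x := by
    linear_combination e4
  exact key_identity (deriv φ x) (iteratedDeriv 2 φ x) (iteratedDeriv 3 φ x)
    (iteratedDeriv 4 φ x) (ψ x (y x)) (px ψ x (y x)) (py ψ x (y x))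
    (px (px ψ) x (y x)) (py (px ψ) x (y x)) (py (py ψ) x (y x))
    (px (px (px ψ)) x (y x)) (py (px (px ψ)) x (y x)) (py (py (px ψ)) x (y x))
    (py (py (py ψ)) x (y x))
    (px (px (px (px ψ))) x (y x)) (py (px (px (px ψ))) x (y x))
    (py (py (px (px ψ))) x (y x)) (py (py (py (px ψ))) x (y x))
    (py (py (py (py ψ))) x (y x))
    (deriv y x) (iteratedDeriv 2 y x) (iteratedDeriv 3 y x) (iteratedDeriv 4 y x)
    (u (φ x)) (deriv u (φ x)) (iteratedDeriv 2 u (φ x)) (iteratedDeriv 3 u (φ x))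
    (iteratedDeriv 4 u (φ x)) (a x) (b x)
    (hφx x hx) (hψy x hx (y x) (hyJ x hx)) (huφ x hx)
    (by linear_combination e1') (by linear_combination e2')
    (by linear_combination e3') (by linear_combination e4')

end Central

set_option maxHeartbeats 1000000 in
/-- with the coefficients of (E1) given by the formulas determined by the
point transformation `t = φ(x)`, `u = ψ(x,y)` and the linear equation
`u'''' + α(t)u' + β(t)u = 0`, a function `y` is a solution of (E1) if and only if its
image `u` is a solution of the linear equation. -/
theorem first_candidate_equation_characterization
    (I J : Set ℝ) (hI : IsOpen I) (hIc : I.OrdConnected)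
    (hJ : IsOpen J) (hJc : J.OrdConnected)
    (φ : ℝ → ℝ) (hφ : ContDiffOn ℝ (⊤ : ℕ∞) φ I) (hφx : ∀ x ∈ I, deriv φ x ≠ 0)
    (ψ : ℝ → ℝ → ℝ) (hψ : Smooth2On ψ (I ×ˢ J))
    (hψy : ∀ x ∈ I, ∀ y ∈ J, py ψ x y ≠ 0)
    (a b : ℝ → ℝ) (ha : ContDiffOn ℝ (⊤ : ℕ∞) a I) (hb : ContDiffOn ℝ (⊤ : ℕ∞) b I)
    (A0 A1 B0 C0 C1 C2 D0 D1 D2 D3 D4 : ℝ → ℝ → ℝ)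
    (hA1 : ∀ x ∈ I, ∀ y ∈ J, A1 x y = 4 * py (py ψ) x y / py ψ x y)
    (hA0 : ∀ x ∈ I, ∀ y ∈ J, A0 x y
      = -2 * (3 * iteratedDeriv 2 φ x * py ψ x y - 2 * deriv φ x * py (px ψ) x y)
        / (deriv φ x * py ψ x y))
    (hB0 : ∀ x ∈ I, ∀ y ∈ J, B0 x y = 3 * py (py ψ) x y / py ψ x y)
    (hC2 : ∀ x ∈ I, ∀ y ∈ J, C2 x y = 6 * py (py (py ψ)) x y / py ψ x y)
    (hC1 : ∀ x ∈ I, ∀ y ∈ J, C1 x y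
      = -6 * (3 * iteratedDeriv 2 φ x * py (py ψ) x y
          - 2 * deriv φ x * py (py (px ψ)) x y)
        / (deriv φ x * py ψ x y))
    (hC0 : ∀ x ∈ I, ∀ y ∈ J, C0 x y
      = -(((4 * iteratedDeriv 3 φ x * deriv φ x - 15 * (iteratedDeriv 2 φ x) ^ 2)
            * py ψ x y
          + 6 * (3 * iteratedDeriv 2 φ x * py (px ψ) x y
            - deriv φ x * py (px (px ψ)) x y) * deriv φ x)
        / ((deriv φ x) ^ 2 * py ψ x y)))
    (hD4 : ∀ x ∈ I, ∀ y ∈ J, D4 x y = py (py (py (py ψ))) x y / py ψ x y)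
    (hD3 : ∀ x ∈ I, ∀ y ∈ J, D3 x y
      = -2 * (3 * iteratedDeriv 2 φ x * py (py (py ψ)) x y
          - 2 * deriv φ x * py (py (py (px ψ))) x y)
        / (deriv φ x * py ψ x y))
    (hD2 : ∀ x ∈ I, ∀ y ∈ J, D2 x y
      = -((4 * iteratedDeriv 3 φ x * deriv φ x * py (py ψ) x y
          - 15 * (iteratedDeriv 2 φ x) ^ 2 * py (py ψ) x y
          + 18 * iteratedDeriv 2 φ x * deriv φ x * py (py (px ψ)) x y
          - 6 * (deriv φ x) ^ 2 * py (py (px (px ψ))) x y)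
        / ((deriv φ x) ^ 2 * py ψ x y)))
    (hD1 : ∀ x ∈ I, ∀ y ∈ J, D1 x y
      = -((3 * (5 * (iteratedDeriv 2 φ x) ^ 2 * py ψ x y
            - 10 * iteratedDeriv 2 φ x * deriv φ x * py (px ψ) x y
            + 6 * (deriv φ x) ^ 2 * py (px (px ψ)) x y) * iteratedDeriv 2 φ x
          - ((deriv φ x) ^ 3 * py ψ x y * a x + 4 * py (px (px (px ψ))) x y)
            * (deriv φ x) ^ 3
          - 2 * (5 * iteratedDeriv 2 φ x * py ψ x y - 4 * deriv φ x * py (px ψ) x y)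
            * iteratedDeriv 3 φ x * deriv φ x
          + iteratedDeriv 4 φ x * (deriv φ x) ^ 2 * py ψ x y)
        / ((deriv φ x) ^ 3 * py ψ x y)))
    (hD0 : ∀ x ∈ I, ∀ y ∈ J, D0 x y
      = -(((15 * (iteratedDeriv 2 φ x) ^ 3 - (deriv φ x) ^ 6 * a x
            + iteratedDeriv 4 φ x * (deriv φ x) ^ 2) * px ψ x y
          - (10 * iteratedDeriv 3 φ x * iteratedDeriv 2 φ x * px ψ x y
            - 4 * iteratedDeriv 3 φ x * deriv φ x * px (px ψ) x y
            + 15 * (iteratedDeriv 2 φ x) ^ 2 * px (px ψ) x y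
            - 6 * iteratedDeriv 2 φ x * deriv φ x * px (px (px ψ)) x y
            + (deriv φ x) ^ 6 * b x * ψ x y
            + (deriv φ x) ^ 2 * px (px (px (px ψ))) x y) * deriv φ x)
        / ((deriv φ x) ^ 3 * py ψ x y)))
    (α β : ℝ → ℝ)
    (hα : ContDiffOn ℝ (⊤ : ℕ∞) α (φ '' I)) (hβ : ContDiffOn ℝ (⊤ : ℕ∞) β (φ '' I))
    (hαa : ∀ x ∈ I, α (φ x) = a x) (hβb : ∀ x ∈ I, β (φ x) = b x) :
    ∀ y : ℝ → ℝ, ContDiffOn ℝ 4 y I → (∀ x ∈ I, y x ∈ J) →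
      ((∀ x ∈ I, E1val A0 A1 B0 C0 C1 C2 D0 D1 D2 D3 D4 y x = 0) ↔
        ∃ (u : ℝ → ℝ) (W : Set ℝ), IsOpen W ∧ (∀ x ∈ I, φ x ∈ W) ∧
          ContDiffOn ℝ 4 u W ∧
          (∀ x ∈ I, u (φ x) = ψ x (y x)) ∧
          (∀ x ∈ I, iteratedDeriv 4 u (φ x) + α (φ x) * deriv u (φ x)
            + β (φ x) * u (φ x) = 0)) := by
  intro y hy hyJ
  -- basic facts
  have h1top : (1 : WithTop ℕ∞) ≤ ((⊤ : ℕ∞) : WithTop ℕ∞) := by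
    rw [← WithTop.coe_one]; exact WithTop.coe_le_coe.2 le_top
  have h4top : (4 : WithTop ℕ∞) ≤ ((⊤ : ℕ∞) : WithTop ℕ∞) := by
    rw [show (4 : WithTop ℕ∞) = ((4 : ℕ∞) : WithTop ℕ∞) by rfl]
    exact WithTop.coe_le_coe.2 le_top
  -- E1val rewritten via the coefficient formulas, combined with `central`
  have hEx : ∀ (u : ℝ → ℝ) (W : Set ℝ), IsOpen W → (∀ s ∈ I, φ s ∈ W) →
      ContDiffOn ℝ 4 u W → (∀ s ∈ I, u (φ s) = ψ s (y s)) → ∀ x ∈ I,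
      E1val A0 A1 B0 C0 C1 C2 D0 D1 D2 D3 D4 y x
        = deriv φ x ^ 4 / py ψ x (y x)
          * (iteratedDeriv 4 u (φ x) + a x * deriv u (φ x) + b x * u (φ x)) := by
    intro u W hWo hmapsW hu4 huφ x hx
    have hc := central (a := a) (b := b) hI hJ hφ hφx hψ hψy hy hyJ hWo hmapsW hu4 huφ x hx
    unfold E1val
    rw [hA1 x hx (y x) (hyJ x hx), hA0 x hx (y x) (hyJ x hx), hB0 x hx (y x) (hyJ x hx),
      hC2 x hx (y x) (hyJ x hx), hC1 x hx (y x) (hyJ x hx), hC0 x hx (y x) (hyJ x hx),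
      hD4 x hx (y x) (hyJ x hx), hD3 x hx (y x) (hyJ x hx), hD2 x hx (y x) (hyJ x hx),
      hD1 x hx (y x) (hyJ x hx), hD0 x hx (y x) (hyJ x hx)]
    exact hc
  constructor
  · intro hE1
    -- construct the inverse function and the image function u
    have hφd : ∀ s ∈ I, HasDerivAt φ (deriv φ s) s := fun s hs =>
      ((hφ.differentiableOn (by norm_num)).differentiableAt (hI.mem_nhds hs)).hasDerivAt
    have hinj : Set.InjOn φ I := by
      intro p hp q hq hpq
      by_contra hne
      rcases lt_or_gt_of_ne hne with h | h
      · obtain ⟨c, hc, hc0⟩ :=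
          exists_deriv_eq_zero h (hφ.continuousOn.mono (hIc.out hp hq)) hpq
        exact hφx c (hIc.out hp hq ⟨le_of_lt hc.1, le_of_lt hc.2⟩) hc0
      · obtain ⟨c, hc, hc0⟩ :=
          exists_deriv_eq_zero h (hφ.continuousOn.mono (hIc.out hq hp)) hpq.symm
        exact hφx c (hIc.out hq hp ⟨le_of_lt hc.1, le_of_lt hc.2⟩) hc0
    have hsd : ∀ s ∈ I, HasStrictDerivAt φ (deriv φ s) s := fun s hs =>
      (hφ.contDiffAt (hI.mem_nhds hs)).hasStrictDerivAt (by simp)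
    have hWopen : IsOpen (φ '' I) := by
      rw [isOpen_iff_mem_nhds]
      rintro w ⟨s, hs, rfl⟩
      rw [← (hsd s hs).map_nhds_eq (hφx s hs)]
      exact Filter.image_mem_map (hI.mem_nhds hs)
    set g := Function.invFunOn φ I with hgdef
    have hgl : ∀ s ∈ I, g (φ s) = s := fun s hs => hinj.leftInvOn_invFunOn hs
    have hgmem : ∀ w ∈ φ '' I, g w ∈ I := by
      rintro w ⟨s, hs, rfl⟩; rw [hgl s hs]; exact hs
    have hg4 : ∀ w ∈ φ '' I, ContDiffAt ℝ 4 g w := by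
      rintro w ⟨s, hs, rfl⟩
      have hc4 : ContDiffAt ℝ 4 φ s := (hφ.contDiffAt (hI.mem_nhds hs)).of_le h4top
      have hfd := (hφd s hs).hasFDerivAt_equiv (hφx s hs)
      have hL4 := hc4.to_localInverse (f' := ContinuousLinearEquiv.unitsEquivAut ℝ
        (Units.mk0 (deriv φ s) (hφx s hs))) hfd (by norm_num)
      have hevI := (hc4.hasStrictFDerivAt' (f' := ContinuousLinearEquiv.unitsEquivAut ℝ
        (Units.mk0 (deriv φ s) (hφx s hs))) hfd (by norm_num)).eventually_left_inverse
      have hev : g =ᶠ[nhds (φ s)] hc4.localInverse (f' := ContinuousLinearEquiv.unitsEquivAut ℝ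
          (Units.mk0 (deriv φ s) (hφx s hs))) hfd (by norm_num) := by
        rw [Filter.EventuallyEq, ← (hsd s hs).map_nhds_eq (hφx s hs),
          Filter.eventually_map]
        filter_upwards [hevI, hI.mem_nhds hs] with t htL htI
        rw [hgl t htI]
        exact htL.symm
      exact hL4.congr_of_eventuallyEq hev
    have hgC : ContDiffOn ℝ 4 g (φ '' I) := fun w hw => (hg4 w hw).contDiffWithinAt
    have hFc : ContDiffOn ℝ 4 (fun s => ψ s (y s)) I := by
      have h2 : ContDiffOn ℝ 4 (fun p : ℝ × ℝ => ψ p.1 p.2) (I ×ˢ J) := hψ.of_le h4top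
      have hpair : ContDiffOn ℝ 4 (fun s => ((s, y s) : ℝ × ℝ)) I := contDiffOn_id.prodMk hy
      exact h2.comp hpair fun s hs => Set.mk_mem_prod hs (hyJ s hs)
    have hu4 : ContDiffOn ℝ 4 (fun w => ψ (g w) (y (g w))) (φ '' I) :=
      hFc.comp hgC hgmem
    have huφ : ∀ s ∈ I, (fun w => ψ (g w) (y (g w))) (φ s) = ψ s (y s) := by
      intro s hs
      simp only [hgl s hs]
    refine ⟨fun w => ψ (g w) (y (g w)), φ '' I, hWopen,
      fun s hs => Set.mem_image_of_mem φ hs, hu4, huφ, ?_⟩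
    intro x hx
    have hkey := (hEx _ _ hWopen (fun s hs => Set.mem_image_of_mem φ hs) hu4 huφ x hx).symm
    rw [hE1 x hx] at hkey
    have hfac : deriv φ x ^ 4 / py ψ x (y x) ≠ 0 :=
      div_ne_zero (pow_ne_zero 4 (hφx x hx)) (hψy x hx (y x) (hyJ x hx))
    have hzero := (mul_eq_zero.1 hkey).resolve_left hfac
    rw [hαa x hx, hβb x hx]
    exact hzero
  · rintro ⟨u, W, hWo, hmapsW, hu4, huφ, hode⟩ x hx
    rw [hEx u W hWo hmapsW hu4 huφ x hx]
    have h0 := hode x hx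
    rw [hαa x hx, hβb x hx] at h0
    rw [h0, mul_zero]
end
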